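/- arXiv:1504.04449 — 3 statements merged into one kernel-verified Lean document; each statement's English description precedes it below -/
import Mathlib

section
/- Let |ψ_{ABC}⟩ be a pure tripartite state with marginals ρ_{AB}, ρ_{AC}, ρ_B, ρ_C. Then the quantum information variance satisfies V(ρ_{AB} ‖ I_A⊗ρ_B) = V(ρ_{AC} ‖ I_A⊗ρ_C), where V(ρ‖σ) = tr[ρ(log ρ − log σ)²] − D(ρ‖σ)². -/
open Matrix Kronecker ComplexOrder

/-- Apply a real function to a Hermitian matrix via its spectral decomposition
(returns 0 on non-Hermitian input). -/
noncomputable def hermFun {n : Type*} [Fintype n] [DecidableEq n]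
    (f : ℝ → ℝ) (A : Matrix n n ℂ) : Matrix n n ℂ :=
  if hA : A.IsHermitian then
    (hA.eigenvectorUnitary : Matrix n n ℂ) *
      Matrix.diagonal (fun i => (f (hA.eigenvalues i) : ℂ)) *
      (hA.eigenvectorUnitary : Matrix n n ℂ)ᴴ
  else 0

/-- Matrix logarithm, taken on the support (`log 0 := 0` on the kernel). -/
noncomputable def mLog {n : Type*} [Fintype n] [DecidableEq n]
    (A : Matrix n n ℂ) : Matrix n n ℂ :=
  hermFun (fun x => if x ≤ 0 then 0 else Real.log x) A

/-- Quantum relative entropy `D(ρ‖σ) = tr[ρ(log ρ − log σ)]`. -/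
noncomputable def relEnt {n : Type*} [Fintype n] [DecidableEq n]
    (ρ σ : Matrix n n ℂ) : ℝ :=
  ((ρ * (mLog ρ - mLog σ)).trace).re

/-- Marginal on AB of a pure tripartite state. -/
noncomputable def rhoAB {a b c : ℕ} (ψ : Fin a × Fin b × Fin c → ℂ) :
    Matrix (Fin a × Fin b) (Fin a × Fin b) ℂ :=
  fun p q => ∑ k : Fin c, ψ (p.1, p.2, k) * star (ψ (q.1, q.2, k))

/-- Marginal on AC of a pure tripartite state. -/
noncomputable def rhoAC {a b c : ℕ} (ψ : Fin a × Fin b × Fin c → ℂ) :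
    Matrix (Fin a × Fin c) (Fin a × Fin c) ℂ :=
  fun p q => ∑ j : Fin b, ψ (p.1, j, p.2) * star (ψ (q.1, j, q.2))

/-- Marginal on B of a pure tripartite state. -/
noncomputable def rhoB {a b c : ℕ} (ψ : Fin a × Fin b × Fin c → ℂ) :
    Matrix (Fin b) (Fin b) ℂ :=
  fun p q => ∑ i : Fin a, ∑ k : Fin c, ψ (i, p, k) * star (ψ (i, q, k))

/-- Marginal on C of a pure tripartite state. -/
noncomputable def rhoC {a b c : ℕ} (ψ : Fin a × Fin b × Fin c → ℂ) :
    Matrix (Fin c) (Fin c) ℂ :=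
  fun p q => ∑ i : Fin a, ∑ j : Fin b, ψ (i, j, p) * star (ψ (i, j, q))


/-- Quantum information variance `V(ρ‖σ) = tr[ρ(log ρ − log σ)²] − D(ρ‖σ)²`. -/
noncomputable def varEnt {n : Type*} [Fintype n] [DecidableEq n]
    (ρ σ : Matrix n n ℂ) : ℝ :=
  ((ρ * (mLog ρ - mLog σ) ^ 2).trace).re - (relEnt ρ σ) ^ 2


section Helpers

open Polynomial

variable {m n : Type*} [Fintype m] [Fintype n] [DecidableEq m] [DecidableEq n]

private lemma pow_sandwich (M : Matrix m n ℂ) (N : Matrix n m ℂ) (k : ℕ) :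
    (M * N) ^ k * M = M * (N * M) ^ k := by
  induction k with
  | zero => simp
  | succ k ih =>
      rw [pow_succ, pow_succ]
      calc (M * N) ^ k * (M * N) * M = ((M * N) ^ k * M) * (N * M) := by
            simp only [Matrix.mul_assoc]
      _ = M * (N * M) ^ k * (N * M) := by rw [ih]
      _ = M * ((N * M) ^ k * (N * M)) := by simp only [Matrix.mul_assoc]

private lemma aeval_sandwich (M : Matrix m n ℂ) (N : Matrix n m ℂ) (q : ℂ[X]) :
    aeval (M * N) q * M = M * aeval (N * M) q := by
  induction q using Polynomial.induction_on' with
  | add p r hp hr => simp only [map_add, Matrix.add_mul, Matrix.mul_add, hp, hr]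
  | monomial k c =>
      simp only [aeval_monomial, Algebra.algebraMap_eq_smul_one, smul_mul_assoc, one_mul,
        mul_smul_comm, Matrix.smul_mul, Matrix.mul_smul, pow_sandwich]

private lemma aeval_conj_unit (u v D : Matrix n n ℂ) (huv : u * v = 1) (hvu : v * u = 1)
    (q : ℂ[X]) : aeval (u * D * v) q = u * aeval D q * v := by
  induction q using Polynomial.induction_on' with
  | add p r hp hr => simp only [map_add, hp, hr, mul_add, add_mul]
  | monomial k c =>
      have hpow : ∀ k : ℕ, (u * D * v) ^ k = u * D ^ k * v := by
        intro k
        induction k with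
        | zero => simpa using huv.symm
        | succ k ih =>
            rw [pow_succ, ih, pow_succ]
            calc u * D ^ k * v * (u * D * v) = u * D ^ k * (v * u) * (D * v) := by noncomm_ring
            _ = u * (D ^ k * D) * v := by rw [hvu]; noncomm_ring
      simp only [aeval_monomial, hpow, Algebra.algebraMap_eq_smul_one, smul_mul_assoc, one_mul,
        mul_smul_comm]

private lemma aeval_diagonal' (d : n → ℂ) (q : ℂ[X]) :
    aeval (Matrix.diagonal d) q = Matrix.diagonal (fun i => q.eval (d i)) := by
  induction q using Polynomial.induction_on' with
  | add p r hp hr => simp [map_add, hp, hr, diagonal_add]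
  | monomial k c =>
      simp [aeval_monomial, diagonal_pow, algebraMap_eq_diagonal, diagonal_mul_diagonal]

private lemma aeval_transpose (A : Matrix n n ℂ) (q : ℂ[X]) :
    aeval Aᵀ q = (aeval A q)ᵀ := by
  induction q using Polynomial.induction_on' with
  | add p r hp hr => simp [map_add, hp, hr]
  | monomial k c =>
      simp [aeval_monomial, ← transpose_pow, Algebra.algebraMap_eq_smul_one, smul_mul_assoc,
        one_mul, transpose_smul]

private lemma aeval_one_kronecker (A : Matrix n n ℂ) (q : ℂ[X]) :
    aeval ((1 : Matrix m m ℂ) ⊗ₖ A) q = (1 : Matrix m m ℂ) ⊗ₖ aeval A q := by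
  induction q using Polynomial.induction_on' with
  | add p r hp hr => simp [map_add, hp, hr, Matrix.kronecker_add, Matrix.kronecker_smul]
  | monomial k c =>
      have hpow : ∀ k : ℕ, ((1 : Matrix m m ℂ) ⊗ₖ A) ^ k = (1 : Matrix m m ℂ) ⊗ₖ (A ^ k) := by
        intro k
        induction k with
        | zero => simp [Matrix.one_kronecker_one]
        | succ k ih => rw [pow_succ, ih, pow_succ, ← Matrix.mul_kronecker_mul, one_mul]
      simp [aeval_monomial, hpow, Algebra.algebraMap_eq_smul_one, smul_mul_assoc, one_mul,
        Matrix.kronecker_smul]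

private lemma hermFun_eq_aeval (f : ℝ → ℝ) {A : Matrix n n ℂ} (hA : A.IsHermitian)
    (p : Polynomial ℝ) (h : ∀ i, p.eval (hA.eigenvalues i) = f (hA.eigenvalues i)) :
    hermFun f A = aeval A (p.map (algebraMap ℝ ℂ)) := by
  have hu1 : (hA.eigenvectorUnitary : Matrix n n ℂ) *
      star (hA.eigenvectorUnitary : Matrix n n ℂ) = 1 :=
    (Matrix.mem_unitaryGroup_iff).mp hA.eigenvectorUnitary.2
  have hu2 : star (hA.eigenvectorUnitary : Matrix n n ℂ) *
      (hA.eigenvectorUnitary : Matrix n n ℂ) = 1 :=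
    (Matrix.mem_unitaryGroup_iff').mp hA.eigenvectorUnitary.2
  rw [hermFun, dif_pos hA]
  conv_rhs => rw [hA.spectral_theorem, Unitary.conjStarAlgAut_apply]
  rw [aeval_conj_unit _ _ _ hu1 hu2, aeval_diagonal']
  rw [Matrix.star_eq_conjTranspose]
  have he : (fun i => ((f (hA.eigenvalues i) : ℝ) : ℂ))
      = fun i => (p.map (algebraMap ℝ ℂ)).eval ((RCLike.ofReal ∘ hA.eigenvalues) i) := by
    funext i
    rw [Function.comp_apply, Polynomial.eval_map,
      show (RCLike.ofReal (hA.eigenvalues i) : ℂ) = algebraMap ℝ ℂ (hA.eigenvalues i) from rfl,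
      Polynomial.eval₂_at_apply, h]
    rfl
  rw [he]

private lemma one_kron_herm {B : Matrix n n ℂ} (hB : B.IsHermitian) :
    ((1 : Matrix m m ℂ) ⊗ₖ B).IsHermitian := by
  ext ⟨i, j⟩ ⟨k, l⟩
  simp only [Matrix.conjTranspose_apply, Matrix.kroneckerMap_apply, star_mul',
    Matrix.one_apply, hB.apply]
  simp [eq_comm, apply_ite (star : ℂ → ℂ)]

private lemma trace_factor (M : Matrix m n ℂ) (N : Matrix n m ℂ) (s : ℂ[X]) :
    ((M * N) * aeval (M * N) s).trace = ((N * M) * aeval (N * M) s).trace := by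
  calc ((M * N) * aeval (M * N) s).trace = (M * (N * aeval (M * N) s)).trace := by
        rw [Matrix.mul_assoc]
  _ = ((N * aeval (M * N) s) * M).trace := by rw [Matrix.trace_mul_comm]
  _ = (N * (aeval (M * N) s * M)).trace := by rw [Matrix.mul_assoc]
  _ = (N * (M * aeval (N * M) s)).trace := by rw [aeval_sandwich]
  _ = ((N * M) * aeval (N * M) s).trace := by rw [Matrix.mul_assoc]

private lemma trace_transpose_aeval (A : Matrix n n ℂ) (s : ℂ[X]) :
    (Aᵀ * aeval Aᵀ s).trace = (A * aeval A s).trace := by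
  rw [aeval_transpose, ← Matrix.transpose_mul, Matrix.trace_transpose, Matrix.trace_mul_comm]

end Helpers

section PureState

open Polynomial

noncomputable def matAB {a b c : ℕ} (ψ : Fin a × Fin b × Fin c → ℂ) :
    Matrix (Fin a × Fin b) (Fin c) ℂ := fun p k => ψ (p.1, p.2, k)

noncomputable def matAC {a b c : ℕ} (ψ : Fin a × Fin b × Fin c → ℂ) :
    Matrix (Fin a × Fin c) (Fin b) ℂ := fun p j => ψ (p.1, j, p.2)

variable {a b c : ℕ} (ψ : Fin a × Fin b × Fin c → ℂ)

private lemma rhoAB_herm : (rhoAB ψ).IsHermitian := by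
  ext p q
  simp [rhoAB, Matrix.conjTranspose_apply, mul_comm]

private lemma rhoAC_herm : (rhoAC ψ).IsHermitian := by
  ext p q
  simp [rhoAC, Matrix.conjTranspose_apply, mul_comm]

private lemma rhoB_herm : (rhoB ψ).IsHermitian := by
  ext p q
  simp [rhoB, Matrix.conjTranspose_apply, mul_comm]

private lemma rhoC_herm : (rhoC ψ).IsHermitian := by
  ext p q
  simp [rhoC, Matrix.conjTranspose_apply, mul_comm]

private lemma rhoAB_fact : rhoAB ψ = matAB ψ * (matAB ψ)ᴴ := by
  ext p q
  simp [rhoAB, matAB, Matrix.mul_apply, Matrix.conjTranspose_apply]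

private lemma rhoAC_fact : rhoAC ψ = matAC ψ * (matAC ψ)ᴴ := by
  ext p q
  simp [rhoAC, matAC, Matrix.mul_apply, Matrix.conjTranspose_apply]

private lemma rhoC_fact : rhoC ψ = ((matAB ψ)ᴴ * matAB ψ)ᵀ := by
  ext p q
  simp [rhoC, matAB, Matrix.mul_apply, Matrix.conjTranspose_apply, Fintype.sum_prod_type,
    mul_comm]

private lemma rhoB_fact : rhoB ψ = ((matAC ψ)ᴴ * matAC ψ)ᵀ := by
  ext p q
  simp only [rhoB, matAC, Matrix.transpose_apply, Matrix.mul_apply,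
    Matrix.conjTranspose_apply, Fintype.sum_prod_type]
  exact Finset.sum_congr rfl fun i _ => Finset.sum_congr rfl fun k _ => mul_comm _ _

private lemma ptraceB (X : Matrix (Fin b) (Fin b) ℂ) :
    (rhoAB ψ * ((1 : Matrix (Fin a) (Fin a) ℂ) ⊗ₖ X)).trace = (rhoB ψ * X).trace := by
  simp only [Matrix.trace, Matrix.diag, Matrix.mul_apply, rhoAB, rhoB,
    Matrix.kroneckerMap_apply, Matrix.one_apply, Fintype.sum_prod_type, ite_mul, one_mul,
    zero_mul, mul_ite, mul_zero, mul_one, Finset.sum_ite_eq, Finset.sum_ite_eq',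
    Finset.mem_univ, if_true, Finset.sum_mul, Finset.mul_sum, Finset.sum_ite_irrel,
    Finset.sum_const_zero]
  rw [Finset.sum_comm]
  refine Finset.sum_congr rfl fun j _ => ?_
  rw [Finset.sum_comm]

private lemma ptraceC (X : Matrix (Fin c) (Fin c) ℂ) :
    (rhoAC ψ * ((1 : Matrix (Fin a) (Fin a) ℂ) ⊗ₖ X)).trace = (rhoC ψ * X).trace := by
  simp only [Matrix.trace, Matrix.diag, Matrix.mul_apply, rhoAC, rhoC,
    Matrix.kroneckerMap_apply, Matrix.one_apply, Fintype.sum_prod_type, ite_mul, one_mul,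
    zero_mul, mul_ite, mul_zero, mul_one, Finset.sum_ite_eq, Finset.sum_ite_eq',
    Finset.mem_univ, if_true, Finset.sum_mul, Finset.mul_sum, Finset.sum_ite_irrel,
    Finset.sum_const_zero]
  rw [Finset.sum_comm]
  refine Finset.sum_congr rfl fun j _ => ?_
  rw [Finset.sum_comm]

private lemma cross_key (P : Matrix (Fin b) (Fin b) ℂ) (Q : Matrix (Fin c) (Fin c) ℂ) :
    (matAB ψ * Qᵀ * (matAB ψ)ᴴ * ((1 : Matrix (Fin a) (Fin a) ℂ) ⊗ₖ P)).trace
      = (matAC ψ * Pᵀ * (matAC ψ)ᴴ * ((1 : Matrix (Fin a) (Fin a) ℂ) ⊗ₖ Q)).trace := by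
  simp only [Matrix.trace, Matrix.diag, Matrix.mul_apply, matAB, matAC,
    Matrix.kroneckerMap_apply, Matrix.one_apply, Matrix.conjTranspose_apply,
    Matrix.transpose_apply, Fintype.sum_prod_type, ite_mul, one_mul, zero_mul, mul_ite, mul_zero,
    mul_one, Finset.sum_ite_irrel, Finset.sum_const_zero, Finset.sum_ite_eq, Finset.sum_ite_eq',
    Finset.mem_univ, if_true, Finset.sum_mul, Finset.mul_sum]
  simp only [← Finset.sum_product']
  exact (Fintype.sum_equiv
    ⟨fun x => (x.1, x.2.2.2.2, x.2.2.2.1, x.2.2.1, x.2.1),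
     fun x => (x.1, x.2.2.2.2, x.2.2.2.1, x.2.2.1, x.2.1),
     fun x => rfl, fun x => rfl⟩ _ _
    (fun x => by obtain ⟨i, k1, k2, j3, j4⟩ := x; simp only [Equiv.coe_fn_mk]; ring)).symm

end PureState


section Main

open Polynomial

private noncomputable def flog : ℝ → ℝ := fun x => if x ≤ 0 then 0 else Real.log x

private lemma mLog_eq {n : Type*} [Fintype n] [DecidableEq n] (A : Matrix n n ℂ) :
    mLog A = hermFun flog A := rfl

variable {a b c : ℕ} (ψ : Fin a × Fin b × Fin c → ℂ)

private lemma htrAB (s : ℂ[X]) :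
    (rhoAB ψ * aeval (rhoAB ψ) s).trace = (rhoC ψ * aeval (rhoC ψ) s).trace := by
  conv_lhs => rw [rhoAB_fact ψ]
  rw [trace_factor, show (matAB ψ)ᴴ * matAB ψ = (rhoC ψ)ᵀ from by
    rw [rhoC_fact, Matrix.transpose_transpose], trace_transpose_aeval]

private lemma htrAC (s : ℂ[X]) :
    (rhoAC ψ * aeval (rhoAC ψ) s).trace = (rhoB ψ * aeval (rhoB ψ) s).trace := by
  conv_lhs => rw [rhoAC_fact ψ]
  rw [trace_factor, show (matAC ψ)ᴴ * matAC ψ = (rhoB ψ)ᵀ from by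
    rw [rhoB_fact, Matrix.transpose_transpose], trace_transpose_aeval]

private lemma hRLAB (q : ℂ[X]) :
    rhoAB ψ * aeval (rhoAB ψ) q = matAB ψ * (aeval (rhoC ψ) q)ᵀ * (matAB ψ)ᴴ := by
  conv_lhs => rw [rhoAB_fact ψ]
  rw [Matrix.mul_assoc, ← aeval_sandwich, show (matAB ψ)ᴴ * matAB ψ = (rhoC ψ)ᵀ from by
    rw [rhoC_fact, Matrix.transpose_transpose], aeval_transpose, ← Matrix.mul_assoc]

private lemma hRLAC (q : ℂ[X]) :
    rhoAC ψ * aeval (rhoAC ψ) q = matAC ψ * (aeval (rhoB ψ) q)ᵀ * (matAC ψ)ᴴ := by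
  conv_lhs => rw [rhoAC_fact ψ]
  rw [Matrix.mul_assoc, ← aeval_sandwich, show (matAC ψ)ᴴ * matAC ψ = (rhoB ψ)ᵀ from by
    rw [rhoB_fact, Matrix.transpose_transpose], aeval_transpose, ← Matrix.mul_assoc]

private lemma hcomm {n : Type*} [Fintype n] [DecidableEq n] (A : Matrix n n ℂ) (q : ℂ[X]) :
    aeval A q * A = A * aeval A q := by
  have h := congrArg (aeval A (R := ℂ)) (mul_comm q (X : ℂ[X]))
  simpa [_root_.map_mul] using h

end Main

/-- Duality of the quantum information variance for a pure tripartite state: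
`V(ρ_AB ‖ I_A ⊗ ρ_B) = V(ρ_AC ‖ I_A ⊗ ρ_C)`. -/
theorem stmt2 (a b c : ℕ) (ψ : Fin a × Fin b × Fin c → ℂ)
    (hψ : ∑ x, Complex.normSq (ψ x) = 1) :
    varEnt (rhoAB ψ) ((1 : Matrix (Fin a) (Fin a) ℂ) ⊗ₖ rhoB ψ)
      = varEnt (rhoAC ψ) ((1 : Matrix (Fin a) (Fin a) ℂ) ⊗ₖ rhoC ψ) := by
  classical
  have hAB := rhoAB_herm ψ
  have hAC := rhoAC_herm ψ
  have hB := rhoB_herm ψ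
  have hC := rhoC_herm ψ
  have h1B : ((1 : Matrix (Fin a) (Fin a) ℂ) ⊗ₖ rhoB ψ).IsHermitian := one_kron_herm hB
  have h1C : ((1 : Matrix (Fin a) (Fin a) ℂ) ⊗ₖ rhoC ψ).IsHermitian := one_kron_herm hC
  set S : Finset ℝ :=
    ((((Finset.univ.image hAB.eigenvalues ∪ Finset.univ.image hAC.eigenvalues) ∪
      Finset.univ.image hB.eigenvalues) ∪ Finset.univ.image hC.eigenvalues) ∪
      Finset.univ.image h1B.eigenvalues) ∪ Finset.univ.image h1C.eigenvalues with hS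
  set p : Polynomial ℝ := Lagrange.interpolate S id flog with hpdef
  have hp : ∀ x ∈ S, p.eval x = flog x := fun x hx => by
    simpa [hpdef] using Lagrange.eval_interpolate_at_node flog (Set.injOn_id _) hx
  set q : Polynomial ℂ := p.map (algebraMap ℝ ℂ) with hq
  have memAB : ∀ i, hAB.eigenvalues i ∈ S := fun i => by
    simp only [hS, Finset.mem_union, Finset.mem_image]
    exact Or.inl (Or.inl (Or.inl (Or.inl (Or.inl ⟨i, Finset.mem_univ i, rfl⟩))))
  have memAC : ∀ i, hAC.eigenvalues i ∈ S := fun i => by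
    simp only [hS, Finset.mem_union, Finset.mem_image]
    exact Or.inl (Or.inl (Or.inl (Or.inl (Or.inr ⟨i, Finset.mem_univ i, rfl⟩))))
  have memB : ∀ i, hB.eigenvalues i ∈ S := fun i => by
    simp only [hS, Finset.mem_union, Finset.mem_image]
    exact Or.inl (Or.inl (Or.inl (Or.inr ⟨i, Finset.mem_univ i, rfl⟩)))
  have memC : ∀ i, hC.eigenvalues i ∈ S := fun i => by
    simp only [hS, Finset.mem_union, Finset.mem_image]
    exact Or.inl (Or.inl (Or.inr ⟨i, Finset.mem_univ i, rfl⟩))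
  have mem1B : ∀ i, h1B.eigenvalues i ∈ S := fun i => by
    simp only [hS, Finset.mem_union, Finset.mem_image]
    exact Or.inl (Or.inr ⟨i, Finset.mem_univ i, rfl⟩)
  have mem1C : ∀ i, h1C.eigenvalues i ∈ S := fun i => by
    simp only [hS, Finset.mem_union, Finset.mem_image]
    exact Or.inr ⟨i, Finset.mem_univ i, rfl⟩
  have hmAB : mLog (rhoAB ψ) = Polynomial.aeval (rhoAB ψ) q := by
    rw [mLog_eq]; exact hermFun_eq_aeval flog hAB p (fun i => hp _ (memAB i))
  have hmAC : mLog (rhoAC ψ) = Polynomial.aeval (rhoAC ψ) q := by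
    rw [mLog_eq]; exact hermFun_eq_aeval flog hAC p (fun i => hp _ (memAC i))
  have hm1B : mLog ((1 : Matrix (Fin a) (Fin a) ℂ) ⊗ₖ rhoB ψ)
      = (1 : Matrix (Fin a) (Fin a) ℂ) ⊗ₖ Polynomial.aeval (rhoB ψ) q := by
    rw [mLog_eq, hermFun_eq_aeval flog h1B p (fun i => hp _ (mem1B i)), aeval_one_kronecker]
  have hm1C : mLog ((1 : Matrix (Fin a) (Fin a) ℂ) ⊗ₖ rhoC ψ)
      = (1 : Matrix (Fin a) (Fin a) ℂ) ⊗ₖ Polynomial.aeval (rhoC ψ) q := by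
    rw [mLog_eq, hermFun_eq_aeval flog h1C p (fun i => hp _ (mem1C i)), aeval_one_kronecker]
  set PB := Polynomial.aeval (rhoB ψ) q with hPB
  set PC := Polynomial.aeval (rhoC ψ) q with hPC
  -- first-order traces
  have dAB : (rhoAB ψ * (mLog (rhoAB ψ) - mLog ((1 : Matrix (Fin a) (Fin a) ℂ) ⊗ₖ rhoB ψ))).trace
      = (rhoC ψ * PC).trace - (rhoB ψ * PB).trace := by
    rw [hmAB, hm1B, Matrix.mul_sub, Matrix.trace_sub, ptraceB, htrAB]
  have dAC : (rhoAC ψ * (mLog (rhoAC ψ) - mLog ((1 : Matrix (Fin a) (Fin a) ℂ) ⊗ₖ rhoC ψ))).trace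
      = (rhoB ψ * PB).trace - (rhoC ψ * PC).trace := by
    rw [hmAC, hm1C, Matrix.mul_sub, Matrix.trace_sub, ptraceC, htrAC]
  -- second-order traces
  have tAB : (rhoAB ψ * (mLog (rhoAB ψ) - mLog ((1 : Matrix (Fin a) (Fin a) ℂ) ⊗ₖ rhoB ψ)) ^ 2).trace
      = (rhoC ψ * Polynomial.aeval (rhoC ψ) (q * q)).trace
        + (rhoB ψ * Polynomial.aeval (rhoB ψ) (q * q)).trace
        - 2 * (matAB ψ * PCᵀ * (matAB ψ)ᴴ * ((1 : Matrix (Fin a) (Fin a) ℂ) ⊗ₖ PB)).trace := by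
    rw [hmAB, hm1B]
    set L := Polynomial.aeval (rhoAB ψ) q with hL
    set K := (1 : Matrix (Fin a) (Fin a) ℂ) ⊗ₖ PB with hK
    have hsq : (L - K) ^ 2 = L * L - L * K - (K * L - K * K) := by noncomm_ring
    rw [hsq, Matrix.mul_sub, Matrix.mul_sub, Matrix.mul_sub, Matrix.trace_sub, Matrix.trace_sub,
      Matrix.trace_sub]
    have t1 : (rhoAB ψ * (L * L)).trace
        = (rhoC ψ * Polynomial.aeval (rhoC ψ) (q * q)).trace := by
      rw [show L * L = Polynomial.aeval (rhoAB ψ) (q * q) from (_root_.map_mul _ _ _).symm, htrAB]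
    have t4 : (rhoAB ψ * (K * K)).trace
        = (rhoB ψ * Polynomial.aeval (rhoB ψ) (q * q)).trace := by
      rw [show K * K = (1 : Matrix (Fin a) (Fin a) ℂ) ⊗ₖ (PB * PB) from by
        rw [hK, ← Matrix.mul_kronecker_mul, one_mul], ptraceB, _root_.map_mul]
    have t2 : (rhoAB ψ * (L * K)).trace
        = (matAB ψ * PCᵀ * (matAB ψ)ᴴ * K).trace := by
      rw [← Matrix.mul_assoc, hL, hRLAB]
    have t3 : (rhoAB ψ * (K * L)).trace
        = (matAB ψ * PCᵀ * (matAB ψ)ᴴ * K).trace := by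
      rw [← Matrix.mul_assoc, Matrix.trace_mul_comm, ← Matrix.mul_assoc, hL, hcomm, hRLAB]
    rw [t1, t2, t3, t4]
    ring
  have tAC : (rhoAC ψ * (mLog (rhoAC ψ) - mLog ((1 : Matrix (Fin a) (Fin a) ℂ) ⊗ₖ rhoC ψ)) ^ 2).trace
      = (rhoB ψ * Polynomial.aeval (rhoB ψ) (q * q)).trace
        + (rhoC ψ * Polynomial.aeval (rhoC ψ) (q * q)).trace
        - 2 * (matAC ψ * PBᵀ * (matAC ψ)ᴴ * ((1 : Matrix (Fin a) (Fin a) ℂ) ⊗ₖ PC)).trace := by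
    rw [hmAC, hm1C]
    set L := Polynomial.aeval (rhoAC ψ) q with hL
    set K := (1 : Matrix (Fin a) (Fin a) ℂ) ⊗ₖ PC with hK
    have hsq : (L - K) ^ 2 = L * L - L * K - (K * L - K * K) := by noncomm_ring
    rw [hsq, Matrix.mul_sub, Matrix.mul_sub, Matrix.mul_sub, Matrix.trace_sub, Matrix.trace_sub,
      Matrix.trace_sub]
    have t1 : (rhoAC ψ * (L * L)).trace
        = (rhoB ψ * Polynomial.aeval (rhoB ψ) (q * q)).trace := by
      rw [show L * L = Polynomial.aeval (rhoAC ψ) (q * q) from (_root_.map_mul _ _ _).symm, htrAC]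
    have t4 : (rhoAC ψ * (K * K)).trace
        = (rhoC ψ * Polynomial.aeval (rhoC ψ) (q * q)).trace := by
      rw [show K * K = (1 : Matrix (Fin a) (Fin a) ℂ) ⊗ₖ (PC * PC) from by
        rw [hK, ← Matrix.mul_kronecker_mul, one_mul], ptraceC, _root_.map_mul]
    have t2 : (rhoAC ψ * (L * K)).trace
        = (matAC ψ * PBᵀ * (matAC ψ)ᴴ * K).trace := by
      rw [← Matrix.mul_assoc, hL, hRLAC]
    have t3 : (rhoAC ψ * (K * L)).trace
        = (matAC ψ * PBᵀ * (matAC ψ)ᴴ * K).trace := by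
      rw [← Matrix.mul_assoc, Matrix.trace_mul_comm, ← Matrix.mul_assoc, hL, hcomm, hRLAC]
    rw [t1, t2, t3, t4]
    ring
  have hcross := cross_key ψ PB PC
  unfold varEnt relEnt
  rw [tAB, tAC, dAB, dAC, hcross]
  simp only [Complex.sub_re, Complex.add_re]
  ring
end

section
/- For a pure tripartite state |ψ_{ABC}⟩, one has tr[ρ_{AB}(log ρ_{AB})(I_A⊗log ρ_B)] = tr[ρ_{AC}(log ρ_{AC})(I_A⊗log ρ_C)]. -/
open Matrix Kronecker ComplexOrder

section AuxLemmas

lemma hermFun_eq {n : Type*} [Fintype n] [DecidableEq n]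
    (f : ℝ → ℝ) {A : Matrix n n ℂ} (hA : A.IsHermitian) :
    hermFun f A = (hA.eigenvectorUnitary : Matrix n n ℂ) *
      Matrix.diagonal (fun i => (f (hA.eigenvalues i) : ℂ)) *
      (hA.eigenvectorUnitary : Matrix n n ℂ)ᴴ := dif_pos hA

lemma mulVec_col {n m k : Type*} [Fintype n] [Fintype m]
    (X : Matrix k n ℂ) (W : Matrix n m ℂ) (j : m) :
    X *ᵥ (fun q => W q j) = fun p => (X * W) p j := by
  funext p; simp [mulVec, mul_apply, dotProduct]

/-- hermFun applied to an eigenvector. -/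
lemma hermFun_mulVec_eig {n : Type*} [Fintype n] [DecidableEq n]
    (f : ℝ → ℝ) {A : Matrix n n ℂ} (hA : A.IsHermitian)
    (lam : ℝ) (v : n → ℂ) (hv : A *ᵥ v = (lam : ℂ) • v) :
    hermFun f A *ᵥ v = ((f lam : ℝ) : ℂ) • v := by
  set U : Matrix n n ℂ := (hA.eigenvectorUnitary : Matrix n n ℂ) with hU
  have hUU : Uᴴ * U = 1 := Unitary.coe_star_mul_self hA.eigenvectorUnitary
  have hUU' : U * Uᴴ = 1 := Unitary.coe_mul_star_self hA.eigenvectorUnitary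
  set w : n → ℂ := Uᴴ *ᵥ v with hw
  have hDw : Matrix.diagonal (fun i => ((hA.eigenvalues i : ℝ) : ℂ)) *ᵥ w = (lam : ℂ) • w := by
    have h1 : A = U * Matrix.diagonal (fun i => ((hA.eigenvalues i : ℝ) : ℂ)) * Uᴴ := by
      simpa [Function.comp_def, Matrix.star_eq_conjTranspose] using hA.spectral_theorem
    have h2 := congrArg (fun x => Uᴴ *ᵥ x) hv
    rw [h1] at h2
    simp only [← mulVec_mulVec, mulVec_smul] at h2
    have h3 : Uᴴ *ᵥ U *ᵥ (Matrix.diagonal (fun i => ((hA.eigenvalues i : ℝ) : ℂ)) *ᵥ (Uᴴ *ᵥ v))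
        = Matrix.diagonal (fun i => ((hA.eigenvalues i : ℝ) : ℂ)) *ᵥ (Uᴴ *ᵥ v) := by
      rw [mulVec_mulVec, hUU, one_mulVec]
    rw [h3] at h2
    exact h2
  have key : Matrix.diagonal (fun i => ((f (hA.eigenvalues i) : ℝ) : ℂ)) *ᵥ w
      = ((f lam : ℝ) : ℂ) • w := by
    funext i
    have hd := congrFun hDw i
    simp only [mulVec_diagonal, Pi.smul_apply, smul_eq_mul] at hd ⊢
    by_cases h0 : w i = 0
    · rw [h0]; ring
    · have hev : ((hA.eigenvalues i : ℝ) : ℂ) = (lam : ℂ) := mul_right_cancel₀ h0 hd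
      have hev' : hA.eigenvalues i = lam := by exact_mod_cast hev
      rw [hev']
  rw [hermFun_eq f hA, ← hU, ← mulVec_mulVec, ← mulVec_mulVec, ← hw, key, mulVec_smul,
    hw, mulVec_mulVec, hUU', one_mulVec]

/-- If the columns of `W` are eigenvectors of `A`, they are eigenvectors of `hermFun f A`. -/
lemma hermFun_mul_of_cols {n m : Type*} [Fintype n] [DecidableEq n] [Fintype m] [DecidableEq m]
    (f : ℝ → ℝ) {A : Matrix n n ℂ} (hA : A.IsHermitian) (W : Matrix n m ℂ) (e : m → ℝ)
    (h : A * W = W * Matrix.diagonal (fun i => ((e i : ℝ) : ℂ))) :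
    hermFun f A * W = W * Matrix.diagonal (fun i => ((f (e i) : ℝ) : ℂ)) := by
  ext p j
  have hvec : A *ᵥ (fun q => W q j) = ((e j : ℝ) : ℂ) • (fun q => W q j) := by
    rw [mulVec_col]
    funext q
    rw [h, Matrix.mul_diagonal]
    simp only [Pi.smul_apply, smul_eq_mul]
    ring
  have hcol := congrFun (hermFun_mulVec_eig f hA (e j) _ hvec) p
  rw [mulVec_col] at hcol
  rw [Matrix.mul_diagonal]
  simp only [Pi.smul_apply, smul_eq_mul] at hcol
  rw [hcol]; ring

/-- hermFun is independent of the chosen unitary diagonalization. -/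
lemma hermFun_of_decomp {n : Type*} [Fintype n] [DecidableEq n]
    (f : ℝ → ℝ) {A V : Matrix n n ℂ} (e : n → ℝ)
    (hV : Vᴴ * V = 1) (hV' : V * Vᴴ = 1)
    (hA : A = V * Matrix.diagonal (fun i => ((e i : ℝ) : ℂ)) * Vᴴ) :
    hermFun f A = V * Matrix.diagonal (fun i => ((f (e i) : ℝ) : ℂ)) * Vᴴ := by
  have hAh : A.IsHermitian := by
    have hDh : (Matrix.diagonal (fun i => ((e i : ℝ) : ℂ))).IsHermitian :=
      isHermitian_diagonal_of_self_adjoint _ (by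
        funext i; simp [Pi.star_apply, Complex.conj_ofReal])
    rw [hA]
    exact isHermitian_mul_mul_conjTranspose V hDh
  have hcol : hermFun f A * V = V * Matrix.diagonal (fun i => ((f (e i) : ℝ) : ℂ)) := by
    apply hermFun_mul_of_cols f hAh
    rw [hA, Matrix.mul_assoc, hV, Matrix.mul_one]
  calc hermFun f A = hermFun f A * V * Vᴴ := by rw [Matrix.mul_assoc, hV', Matrix.mul_one]
    _ = V * Matrix.diagonal (fun i => ((f (e i) : ℝ) : ℂ)) * Vᴴ := by rw [hcol]

/-- Intertwining: `f(M Mᴴ) M = M f(Mᴴ M)`. -/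
lemma hermFun_intertwine {n m : Type*} [Fintype n] [DecidableEq n] [Fintype m] [DecidableEq m]
    (f : ℝ → ℝ) (M : Matrix n m ℂ) :
    hermFun f (M * Mᴴ) * M = M * hermFun f (Mᴴ * M) := by
  have hA : (Mᴴ * M).IsHermitian := isHermitian_conjTranspose_mul_self M
  have hB : (M * Mᴴ).IsHermitian := isHermitian_mul_conjTranspose_self M
  obtain ⟨U, e, hUU, hUU', hspec⟩ :
      ∃ (U : Matrix m m ℂ) (e : m → ℝ), Uᴴ * U = 1 ∧ U * Uᴴ = 1 ∧
        Mᴴ * M = U * Matrix.diagonal (fun i => ((e i : ℝ) : ℂ)) * Uᴴ :=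
    ⟨hA.eigenvectorUnitary, hA.eigenvalues,
      Unitary.coe_star_mul_self hA.eigenvectorUnitary,
      Unitary.coe_mul_star_self hA.eigenvectorUnitary,
      by simpa [Function.comp_def, Matrix.star_eq_conjTranspose] using hA.spectral_theorem⟩
  have hrhs : hermFun f (Mᴴ * M) = U * Matrix.diagonal (fun i => ((f (e i) : ℝ) : ℂ)) * Uᴴ :=
    hermFun_of_decomp f e hUU hUU' hspec
  have hcol : hermFun f (M * Mᴴ) * (M * U)
      = (M * U) * Matrix.diagonal (fun i => ((f (e i) : ℝ) : ℂ)) := by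
    apply hermFun_mul_of_cols f hB
    calc (M * Mᴴ) * (M * U) = M * (Mᴴ * M) * U := by simp only [Matrix.mul_assoc]
      _ = M * (U * Matrix.diagonal (fun i => ((e i : ℝ) : ℂ)) * Uᴴ) * U := by rw [hspec]
      _ = (M * U) * Matrix.diagonal (fun i => ((e i : ℝ) : ℂ)) * (Uᴴ * U) := by
          simp only [Matrix.mul_assoc]
      _ = (M * U) * Matrix.diagonal (fun i => ((e i : ℝ) : ℂ)) := by rw [hUU, Matrix.mul_one]
  calc hermFun f (M * Mᴴ) * M
      = hermFun f (M * Mᴴ) * (M * U) * Uᴴ := by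
        simp only [Matrix.mul_assoc]; rw [hUU', Matrix.mul_one]
    _ = (M * U) * Matrix.diagonal (fun i => ((f (e i) : ℝ) : ℂ)) * Uᴴ := by rw [hcol]
    _ = M * hermFun f (Mᴴ * M) := by rw [hrhs]; simp only [Matrix.mul_assoc]

/-- hermFun commutes with transpose on Hermitian matrices. -/
lemma hermFun_transpose {n : Type*} [Fintype n] [DecidableEq n]
    (f : ℝ → ℝ) {A : Matrix n n ℂ} (hA : A.IsHermitian) :
    hermFun f Aᵀ = (hermFun f A)ᵀ := by
  obtain ⟨U, e, hUU, hUU', hspec⟩ :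
      ∃ (U : Matrix n n ℂ) (e : n → ℝ), Uᴴ * U = 1 ∧ U * Uᴴ = 1 ∧
        A = U * Matrix.diagonal (fun i => ((e i : ℝ) : ℂ)) * Uᴴ :=
    ⟨hA.eigenvectorUnitary, hA.eigenvalues,
      Unitary.coe_star_mul_self hA.eigenvectorUnitary,
      Unitary.coe_mul_star_self hA.eigenvectorUnitary,
      by simpa [Function.comp_def, Matrix.star_eq_conjTranspose] using hA.spectral_theorem⟩
  have hdiagT : ∀ g : n → ℝ, (Matrix.diagonal (fun i => ((g i : ℝ) : ℂ)))ᵀ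
      = Matrix.diagonal (fun i => ((g i : ℝ) : ℂ)) := fun g => diagonal_transpose _
  set V : Matrix n n ℂ := Uᴴᵀ with hV
  have hVH : Vᴴ = Uᵀ := by
    ext i j; simp [hV, conjTranspose_apply, transpose_apply]
  have hVV : Vᴴ * V = 1 := by
    rw [hVH, hV, ← transpose_mul, hUU, transpose_one]
  have hVV' : V * Vᴴ = 1 := by
    rw [hVH, hV, ← transpose_mul, hUU', transpose_one]
  have hAT : Aᵀ = V * Matrix.diagonal (fun i => ((e i : ℝ) : ℂ)) * Vᴴ := by
    rw [hspec]
    rw [transpose_mul, transpose_mul, hdiagT e, hVH, hV]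
    simp only [Matrix.mul_assoc]
  rw [hermFun_of_decomp f e hVV hVV' hAT, hermFun_of_decomp f e hUU hUU' hspec]
  rw [transpose_mul, transpose_mul, hdiagT, hVH, hV]
  simp only [Matrix.mul_assoc]

/-- A Hermitian matrix commutes with hermFun of itself. -/
lemma hermFun_comm {n : Type*} [Fintype n] [DecidableEq n]
    (f : ℝ → ℝ) {A : Matrix n n ℂ} (hA : A.IsHermitian) :
    A * hermFun f A = hermFun f A * A := by
  obtain ⟨U, e, hUU, hUU', hspec⟩ :
      ∃ (U : Matrix n n ℂ) (e : n → ℝ), Uᴴ * U = 1 ∧ U * Uᴴ = 1 ∧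
        A = U * Matrix.diagonal (fun i => ((e i : ℝ) : ℂ)) * Uᴴ :=
    ⟨hA.eigenvectorUnitary, hA.eigenvalues,
      Unitary.coe_star_mul_self hA.eigenvectorUnitary,
      Unitary.coe_mul_star_self hA.eigenvectorUnitary,
      by simpa [Function.comp_def, Matrix.star_eq_conjTranspose] using hA.spectral_theorem⟩
  rw [hermFun_of_decomp f e hUU hUU' hspec]
  conv_lhs => rw [hspec]
  conv_rhs => rw [hspec]
  have key : ∀ g h : n → ℂ, (U * Matrix.diagonal g * Uᴴ) * (U * Matrix.diagonal h * Uᴴ)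
      = U * (Matrix.diagonal g * Matrix.diagonal h) * Uᴴ := by
    intro g h
    calc (U * Matrix.diagonal g * Uᴴ) * (U * Matrix.diagonal h * Uᴴ)
        = U * Matrix.diagonal g * (Uᴴ * U) * Matrix.diagonal h * Uᴴ := by
          simp only [Matrix.mul_assoc]
      _ = U * (Matrix.diagonal g * Matrix.diagonal h) * Uᴴ := by
          rw [hUU, Matrix.mul_one]; simp only [Matrix.mul_assoc]
  rw [key, key, diagonal_mul_diagonal, diagonal_mul_diagonal]
  have : (fun i => ((e i : ℝ) : ℂ) * ((f (e i) : ℝ) : ℂ))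
      = (fun i => ((f (e i) : ℝ) : ℂ) * ((e i : ℝ) : ℂ)) := by
    funext i; ring
  rw [this]

lemma mLog_comm {n : Type*} [Fintype n] [DecidableEq n]
    {A : Matrix n n ℂ} (hA : A.IsHermitian) : A * mLog A = mLog A * A :=
  hermFun_comm _ hA

lemma mLog_intertwine {n m : Type*} [Fintype n] [DecidableEq n] [Fintype m] [DecidableEq m]
    (M : Matrix n m ℂ) : mLog (M * Mᴴ) * M = M * mLog (Mᴴ * M) :=
  hermFun_intertwine _ M

lemma mLog_transpose {n : Type*} [Fintype n] [DecidableEq n]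
    {A : Matrix n n ℂ} (hA : A.IsHermitian) : mLog Aᵀ = (mLog A)ᵀ :=
  hermFun_transpose _ hA

set_option maxHeartbeats 1000000 in
lemma trace_expand {α β γ : Type*} [Fintype α] [DecidableEq α] [Fintype β] [DecidableEq β]
    [Fintype γ] [DecidableEq γ]
    (M : Matrix (α × β) γ ℂ) (LB : Matrix β β ℂ) (LC : Matrix γ γ ℂ) :
    (M * LCᵀ * (Mᴴ * ((1 : Matrix α α ℂ) ⊗ₖ LB))).trace
      = ∑ i : α, ∑ j : β, ∑ j' : β, ∑ k : γ, ∑ k' : γ,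
          M (i, j) k * star (M (i, j') k') * LB j' j * LC k' k := by
  simp only [Matrix.trace, Matrix.diag, mul_apply, conjTranspose_apply, transpose_apply,
    kroneckerMap_apply, one_apply, Finset.sum_mul, Finset.mul_sum,
    Fintype.sum_prod_type, mul_ite, ite_mul, mul_one, one_mul, mul_zero, zero_mul,
    Finset.sum_ite_eq, Finset.sum_ite_eq', Finset.mem_univ, if_true]
  have collapse : ∀ (x : α) (F : α → β → ℂ),
      (∑ x3 : α, ∑ x4 : β, if x3 = x then F x3 x4 else 0) = ∑ x4 : β, F x x4 := by
    intro x F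
    rw [Finset.sum_comm]
    simp
  simp only [collapse]
  refine Finset.sum_congr rfl fun i _ => Finset.sum_congr rfl fun j _ => ?_
  rw [Finset.sum_comm]
  refine Finset.sum_congr rfl fun j' _ => ?_
  rw [Finset.sum_comm]
  refine Finset.sum_congr rfl fun k _ => Finset.sum_congr rfl fun k' _ => ?_
  ring

lemma sum_swap_blocks {β γ : Type*} [Fintype β] [Fintype γ] (f : β → β → γ → γ → ℂ) :
    ∑ j : β, ∑ j' : β, ∑ k : γ, ∑ k' : γ, f j j' k k'
      = ∑ k : γ, ∑ k' : γ, ∑ j : β, ∑ j' : β, f j j' k k' := by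
  calc ∑ j : β, ∑ j' : β, ∑ k : γ, ∑ k' : γ, f j j' k k'
      = ∑ j : β, ∑ k : γ, ∑ j' : β, ∑ k' : γ, f j j' k k' :=
        Finset.sum_congr rfl fun j _ => Finset.sum_comm
    _ = ∑ k : γ, ∑ j : β, ∑ j' : β, ∑ k' : γ, f j j' k k' := Finset.sum_comm
    _ = ∑ k : γ, ∑ j : β, ∑ k' : γ, ∑ j' : β, f j j' k k' :=
        Finset.sum_congr rfl fun k _ => Finset.sum_congr rfl fun j _ => Finset.sum_comm
    _ = ∑ k : γ, ∑ k' : γ, ∑ j : β, ∑ j' : β, f j j' k k' :=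
        Finset.sum_congr rfl fun k _ => Finset.sum_comm

end AuxLemmas


set_option maxHeartbeats 1000000 in
/-- For a pure tripartite state,
`tr[ρ_AB (log ρ_AB)(I_A ⊗ log ρ_B)] = tr[ρ_AC (log ρ_AC)(I_A ⊗ log ρ_C)]`. -/
theorem stmt3 (a b c : ℕ) (ψ : Fin a × Fin b × Fin c → ℂ)
    (hψ : ∑ x, Complex.normSq (ψ x) = 1) :
    (rhoAB ψ * mLog (rhoAB ψ) *
        ((1 : Matrix (Fin a) (Fin a) ℂ) ⊗ₖ mLog (rhoB ψ))).trace
      = (rhoAC ψ * mLog (rhoAC ψ) *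
        ((1 : Matrix (Fin a) (Fin a) ℂ) ⊗ₖ mLog (rhoC ψ))).trace := by
  classical
  set M : Matrix (Fin a × Fin b) (Fin c) ℂ :=
    Matrix.of (fun p k => ψ (p.1, p.2, k)) with hM
  set N : Matrix (Fin a × Fin c) (Fin b) ℂ :=
    Matrix.of (fun p j => ψ (p.1, j, p.2)) with hN
  have hAB : rhoAB ψ = M * Mᴴ := by
    ext p q
    simp [rhoAB, mul_apply, conjTranspose_apply, hM]
  have hAC : rhoAC ψ = N * Nᴴ := by
    ext p q
    simp [rhoAC, mul_apply, conjTranspose_apply, hN]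
  have hC : Mᴴ * M = (rhoC ψ)ᵀ := by
    ext k k'
    simp only [mul_apply, conjTranspose_apply, transpose_apply, rhoC, hM, Matrix.of_apply,
      Fintype.sum_prod_type]
    exact Finset.sum_congr rfl fun i _ => Finset.sum_congr rfl fun j _ => mul_comm _ _
  have hB : Nᴴ * N = (rhoB ψ)ᵀ := by
    ext j j'
    simp only [mul_apply, conjTranspose_apply, transpose_apply, rhoB, hN, Matrix.of_apply,
      Fintype.sum_prod_type]
    exact Finset.sum_congr rfl fun i _ => Finset.sum_congr rfl fun k _ => mul_comm _ _
  have hABh : (rhoAB ψ).IsHermitian := by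
    rw [hAB]; exact isHermitian_mul_conjTranspose_self M
  have hACh : (rhoAC ψ).IsHermitian := by
    rw [hAC]; exact isHermitian_mul_conjTranspose_self N
  have hCh : (rhoC ψ).IsHermitian := by
    have h : rhoC ψ = (Mᴴ * M)ᵀ := by rw [hC, transpose_transpose]
    rw [h]; exact (isHermitian_conjTranspose_mul_self M).transpose
  have hBh : (rhoB ψ).IsHermitian := by
    have h : rhoB ψ = (Nᴴ * N)ᵀ := by rw [hB, transpose_transpose]
    rw [h]; exact (isHermitian_conjTranspose_mul_self N).transpose
  have redL : rhoAB ψ * mLog (rhoAB ψ) * ((1 : Matrix (Fin a) (Fin a) ℂ) ⊗ₖ mLog (rhoB ψ))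
      = M * (mLog (rhoC ψ))ᵀ * (Mᴴ * ((1 : Matrix (Fin a) (Fin a) ℂ) ⊗ₖ mLog (rhoB ψ))) := by
    calc rhoAB ψ * mLog (rhoAB ψ) * ((1 : Matrix (Fin a) (Fin a) ℂ) ⊗ₖ mLog (rhoB ψ))
        = mLog (rhoAB ψ) * rhoAB ψ * ((1 : Matrix (Fin a) (Fin a) ℂ) ⊗ₖ mLog (rhoB ψ)) := by
          rw [mLog_comm hABh]
      _ = mLog (M * Mᴴ) * M * (Mᴴ * ((1 : Matrix (Fin a) (Fin a) ℂ) ⊗ₖ mLog (rhoB ψ))) := by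
          rw [hAB]; simp only [Matrix.mul_assoc]
      _ = M * mLog (Mᴴ * M) * (Mᴴ * ((1 : Matrix (Fin a) (Fin a) ℂ) ⊗ₖ mLog (rhoB ψ))) := by
          rw [mLog_intertwine]
      _ = M * (mLog (rhoC ψ))ᵀ * (Mᴴ * ((1 : Matrix (Fin a) (Fin a) ℂ) ⊗ₖ mLog (rhoB ψ))) := by
          rw [hC, mLog_transpose hCh]
  have redR : rhoAC ψ * mLog (rhoAC ψ) * ((1 : Matrix (Fin a) (Fin a) ℂ) ⊗ₖ mLog (rhoC ψ))
      = N * (mLog (rhoB ψ))ᵀ * (Nᴴ * ((1 : Matrix (Fin a) (Fin a) ℂ) ⊗ₖ mLog (rhoC ψ))) := by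
    calc rhoAC ψ * mLog (rhoAC ψ) * ((1 : Matrix (Fin a) (Fin a) ℂ) ⊗ₖ mLog (rhoC ψ))
        = mLog (rhoAC ψ) * rhoAC ψ * ((1 : Matrix (Fin a) (Fin a) ℂ) ⊗ₖ mLog (rhoC ψ)) := by
          rw [mLog_comm hACh]
      _ = mLog (N * Nᴴ) * N * (Nᴴ * ((1 : Matrix (Fin a) (Fin a) ℂ) ⊗ₖ mLog (rhoC ψ))) := by
          rw [hAC]; simp only [Matrix.mul_assoc]
      _ = N * mLog (Nᴴ * N) * (Nᴴ * ((1 : Matrix (Fin a) (Fin a) ℂ) ⊗ₖ mLog (rhoC ψ))) := by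
          rw [mLog_intertwine]
      _ = N * (mLog (rhoB ψ))ᵀ * (Nᴴ * ((1 : Matrix (Fin a) (Fin a) ℂ) ⊗ₖ mLog (rhoC ψ))) := by
          rw [hB, mLog_transpose hBh]
  rw [redL, redR, trace_expand M (mLog (rhoB ψ)) (mLog (rhoC ψ)),
    trace_expand N (mLog (rhoC ψ)) (mLog (rhoB ψ))]
  refine Finset.sum_congr rfl fun i _ => ?_
  rw [sum_swap_blocks]
  refine Finset.sum_congr rfl fun k _ => Finset.sum_congr rfl fun k' _ =>
    Finset.sum_congr rfl fun j _ => Finset.sum_congr rfl fun j' _ => ?_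
  simp only [hM, hN, Matrix.of_apply]
  ring
end

section
/- (Average vs. entanglement fidelity) For any quantum operation (CPTP map) Λ on B(H) with d = dim H, F_avg(Λ) = (d·F_ent(Λ) + 1)/(d+1), where F_avg(Λ) = ∫ dμ(φ) ⟨φ|Λ(φ)|φ⟩ over Haar-random pure states, and F_ent(Λ) = ⟨Φ|(id⊗Λ)(Φ)|Φ⟩ for the maximally entangled state Φ on H⊗H. -/
open Matrix Kronecker ComplexOrder MeasureTheory

/-- Blockwise application of a map on the second tensor factor: `id ⊗ Λ`. -/
def lTen {R A B : Type*} (Λ : Matrix A A ℂ → Matrix B B ℂ)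
    (M : Matrix (R × A) (R × A) ℂ) : Matrix (R × B) (R × B) ℂ :=
  fun p q => Λ (fun x y => M (p.1, x) (q.1, y)) p.2 q.2

/-- Complete positivity of a map on matrix algebras. -/
def IsCP {A B : Type*} [Fintype A] [DecidableEq A] [Fintype B] [DecidableEq B]
    (Λ : Matrix A A ℂ → Matrix B B ℂ) : Prop :=
  ∀ (k : ℕ) (M : Matrix (Fin k × A) (Fin k × A) ℂ),
    M.PosSemidef → (lTen Λ M).PosSemidef

/-- The maximally entangled state `Φ` as a density matrix. -/
noncomputable def mes (d : ℕ) : Matrix (Fin d × Fin d) (Fin d × Fin d) ℂ :=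
  fun p q => if p.1 = p.2 ∧ q.1 = q.2 then ((d : ℂ))⁻¹ else 0

/-- The maximally entangled state `|Φ⟩` as a vector. -/
noncomputable def mesVec (d : ℕ) : Fin d × Fin d → ℂ :=
  fun p => if p.1 = p.2 then ((Real.sqrt d)⁻¹ : ℂ) else 0

-- ===== auxiliary development =====

namespace S16
variable {d : ℕ}


noncomputable def mono (i j k l : Fin d) (ψ : Fin d → ℂ) : ℂ :=
  ψ i * (starRingEnd ℂ) (ψ j) * (starRingEnd ℂ) (ψ k) * ψ l

lemma mono_cont (i j k l : Fin d) : Continuous (mono i j k l) := by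
  unfold mono
  have hc : Continuous (starRingEnd ℂ) := Complex.continuous_conj
  continuity

lemma norm_le_one {ψ : Fin d → ℂ} (h : ∑ i, Complex.normSq (ψ i) = 1) (i : Fin d) :
    ‖ψ i‖ ≤ 1 := by
  have h1 : Complex.normSq (ψ i) ≤ 1 := by
    rw [← h]
    exact Finset.single_le_sum (f := fun i => Complex.normSq (ψ i))
      (fun j _ => Complex.normSq_nonneg _) (Finset.mem_univ i)
  have h2 : ‖ψ i‖ ^ 2 = Complex.normSq (ψ i) := by
    rw [Complex.normSq_eq_norm_sq]
  nlinarith [norm_nonneg (ψ i)]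

lemma mono_bound {ψ : Fin d → ℂ} (h : ∑ i, Complex.normSq (ψ i) = 1) (i j k l : Fin d) :
    ‖mono i j k l ψ‖ ≤ 1 := by
  unfold mono
  simp only [norm_mul, RCLike.norm_conj]
  have := norm_le_one h
  have h0 : (0:ℝ) ≤ ‖ψ i‖ := norm_nonneg _
  have h0' : (0:ℝ) ≤ ‖ψ j‖ := norm_nonneg _
  have h0'' : (0:ℝ) ≤ ‖ψ k‖ := norm_nonneg _
  have h0''' : (0:ℝ) ≤ ‖ψ l‖ := norm_nonneg _
  have p1 : ‖ψ i‖ * ‖ψ j‖ ≤ 1 := mul_le_one₀ (this i) h0' (this j)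
  have p2 : ‖ψ i‖ * ‖ψ j‖ * ‖ψ k‖ ≤ 1 := mul_le_one₀ p1 h0'' (this k)
  exact mul_le_one₀ p2 h0''' (this l)




lemma mulVec_continuous (W : Matrix (Fin d) (Fin d) ℂ) :
    Continuous fun ψ : Fin d → ℂ => W *ᵥ ψ := by
  refine continuous_pi fun i => ?_
  simp only [mulVec, dotProduct]
  fun_prop


/-- phase matrix -/
noncomputable def phaseM (t : Fin d) : Matrix (Fin d) (Fin d) ℂ :=
  diagonal (fun a => if a = t then Complex.I else 1)

lemma phaseM_mem (t : Fin d) : phaseM t ∈ Matrix.unitaryGroup (Fin d) ℂ := by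
  rw [Matrix.mem_unitaryGroup_iff]
  unfold phaseM
  rw [star_eq_conjTranspose, diagonal_conjTranspose, diagonal_mul_diagonal]
  convert diagonal_one using 2
  ext a
  by_cases h : a = t <;> simp [h, Pi.star_apply, Complex.mul_conj, Complex.normSq_I]

lemma phaseM_mulVec (t : Fin d) (ψ : Fin d → ℂ) (a : Fin d) :
    (phaseM t *ᵥ ψ) a = (if a = t then Complex.I else 1) * ψ a := by
  simp [phaseM, mulVec_diagonal]

/-- permutation matrix -/
def permM (e : Equiv.Perm (Fin d)) : Matrix (Fin d) (Fin d) ℂ :=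
  fun a b => if e b = a then 1 else 0

lemma permM_mulVec (e : Equiv.Perm (Fin d)) (ψ : Fin d → ℂ) (a : Fin d) :
    (permM e *ᵥ ψ) a = ψ (e⁻¹ a) := by
  simp only [permM, mulVec, dotProduct]
  rw [Finset.sum_eq_single (e⁻¹ a)]
  · simp
  · intro b _ hb
    rw [if_neg, zero_mul]
    intro h; apply hb; rw [← h]; simp
  · simp

lemma permM_mem (e : Equiv.Perm (Fin d)) : permM e ∈ Matrix.unitaryGroup (Fin d) ℂ := by
  rw [Matrix.mem_unitaryGroup_iff']
  ext a b
  simp only [Matrix.mul_apply, star_eq_conjTranspose, conjTranspose_apply, permM]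
  rw [Finset.sum_eq_single (e a)]
  · by_cases h : a = b
    · simp [h, Matrix.one_apply]
    · rw [if_pos rfl, if_neg (fun hh : e b = e a => h (e.injective hh).symm)]
      simp [Matrix.one_apply, h]
  · intro x _ hx
    rw [if_neg (fun h : e a = x => hx h.symm)]
    simp
  · simp



noncomputable def rc : ℂ := ((Real.sqrt 2 : ℝ) : ℂ)⁻¹

lemma rc_conj : (starRingEnd ℂ) rc = rc := by
  unfold rc; rw [map_inv₀, Complex.conj_ofReal]

lemma rc_sq : rc * rc = (2 : ℂ)⁻¹ := by
  unfold rc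
  rw [← mul_inv, ← Complex.ofReal_mul, Real.mul_self_sqrt (by norm_num)]
  norm_num

/-- rotation (Hadamard) matrix in the plane spanned by coordinates `p ≠ q` -/
noncomputable def rotM (p q : Fin d) : Matrix (Fin d) (Fin d) ℂ :=
  fun a b =>
    if a = p then (if b = p then rc else if b = q then rc else 0)
    else if a = q then (if b = p then rc else if b = q then -rc else 0)
    else (if b = a then 1 else 0)

lemma rotM_star (p q : Fin d) : star (rotM p q) = rotM p q := by
  ext a b
  rw [star_eq_conjTranspose, conjTranspose_apply]
  unfold rotM
  by_cases hap : a = p <;> by_cases haq : a = q <;>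
    by_cases hbp : b = p <;> by_cases hbq : b = q <;>
    simp_all [rc_conj, eq_comm, map_inv₀]

lemma rotM_row_p {p q : Fin d} (hpq : p ≠ q) (x : Fin d) (v : Fin d → ℂ) :
    rotM p q p x * v x
      = (if x = p then rc * v x else 0) + (if x = q then rc * v x else 0) := by
  unfold rotM
  by_cases hxp : x = p <;> by_cases hxq : x = q <;> simp_all

lemma rotM_row_q {p q : Fin d} (hpq : p ≠ q) (x : Fin d) (v : Fin d → ℂ) :
    rotM p q q x * v x
      = (if x = p then rc * v x else 0) + (if x = q then -rc * v x else 0) := by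
  unfold rotM
  by_cases hxp : x = p <;> by_cases hxq : x = q <;> simp_all [Ne.symm hpq]

lemma rotM_sum_p {p q : Fin d} (hpq : p ≠ q) (v : Fin d → ℂ) :
    ∑ x, rotM p q p x * v x = rc * v p + rc * v q := by
  rw [Finset.sum_congr rfl fun x _ => rotM_row_p hpq x v, Finset.sum_add_distrib]
  simp

lemma rotM_sum_q {p q : Fin d} (hpq : p ≠ q) (v : Fin d → ℂ) :
    ∑ x, rotM p q q x * v x = rc * v p + -rc * v q := by
  rw [Finset.sum_congr rfl fun x _ => rotM_row_q hpq x v, Finset.sum_add_distrib]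
  simp

lemma rotM_pp {p q : Fin d} (hpq : p ≠ q) : rotM p q p p = rc := by simp [rotM]
lemma rotM_pq {p q : Fin d} (hpq : p ≠ q) : rotM p q p q = rc := by
  simp [rotM, Ne.symm hpq]
lemma rotM_qp {p q : Fin d} (hpq : p ≠ q) : rotM p q q p = rc := by
  simp [rotM, hpq, Ne.symm hpq]
lemma rotM_qq {p q : Fin d} (hpq : p ≠ q) : rotM p q q q = -rc := by
  simp [rotM, hpq, Ne.symm hpq]
lemma rotM_p_other {p q b : Fin d} (hbp : b ≠ p) (hbq : b ≠ q) : rotM p q p b = 0 := by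
  simp [rotM, hbp, hbq]
lemma rotM_q_other {p q b : Fin d} (hpq : p ≠ q) (hbp : b ≠ p) (hbq : b ≠ q) :
    rotM p q q b = 0 := by
  simp [rotM, hbp, hbq, Ne.symm hpq]

lemma rotM_mul_self {p q : Fin d} (hpq : p ≠ q) : rotM p q * rotM p q = 1 := by
  ext a b
  rw [Matrix.mul_apply]
  by_cases hap : a = p
  · rw [hap, rotM_sum_p hpq]
    by_cases hbp : b = p
    · rw [hbp, rotM_pp hpq, rotM_qp hpq, Matrix.one_apply_eq, rc_sq]
      norm_num
    · by_cases hbq : b = q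
      · rw [hbq, rotM_pq hpq, rotM_qq hpq, Matrix.one_apply_ne hpq]
        ring
      · rw [rotM_p_other hbp hbq, rotM_q_other hpq hbp hbq,
          Matrix.one_apply_ne (fun h => hbp h.symm)]
        ring
  · by_cases haq : a = q
    · rw [haq, rotM_sum_q hpq]
      by_cases hbp : b = p
      · rw [hbp, rotM_pp hpq, rotM_qp hpq, Matrix.one_apply_ne (Ne.symm hpq)]
        ring
      · by_cases hbq : b = q
        · rw [hbq, rotM_pq hpq, rotM_qq hpq, Matrix.one_apply_eq]
          rw [neg_mul_neg, rc_sq]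
          norm_num
        · rw [rotM_p_other hbp hbq, rotM_q_other hpq hbp hbq,
            Matrix.one_apply_ne (fun h => hbq h.symm)]
          ring
    · have hrow : ∀ x, rotM p q a x * rotM p q x b
          = if x = a then rotM p q x b else 0 := by
        intro x
        by_cases hxa : x = a <;> simp [rotM, hap, haq, hxa]
      rw [Finset.sum_congr rfl fun x _ => hrow x,
        Finset.sum_ite_eq' Finset.univ a fun x => rotM p q x b]
      simp only [Finset.mem_univ, if_pos]
      by_cases hba : b = a
      · rw [hba]
        simp [rotM, hap, haq, Matrix.one_apply]
      · have hab : a ≠ b := fun h => hba h.symm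
        simp [rotM, hap, haq, hba, Matrix.one_apply_ne hab]

lemma rotM_mem {p q : Fin d} (hpq : p ≠ q) : rotM p q ∈ Matrix.unitaryGroup (Fin d) ℂ := by
  rw [Matrix.mem_unitaryGroup_iff, rotM_star, rotM_mul_self hpq]

lemma rotM_mulVec_p {p q : Fin d} (hpq : p ≠ q) (ψ : Fin d → ℂ) :
    (rotM p q *ᵥ ψ) p = rc * ψ p + rc * ψ q := by
  simp only [mulVec, dotProduct]
  exact rotM_sum_p hpq ψ


variable (μ : Measure (Fin d → ℂ)) [IsProbabilityMeasure μ]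
lemma mono_integrable (hsph : ∀ᵐ ψ ∂μ, ∑ i, Complex.normSq (ψ i) = 1)
    (i j k l : Fin d) : Integrable (mono i j k l) μ :=
  Integrable.mono' (integrable_const 1) (mono_cont i j k l).aestronglyMeasurable
    (hsph.mono fun ψ h => mono_bound h i j k l)


omit [IsProbabilityMeasure μ] in
lemma integral_comp_unitary
    (hinvar : ∀ W ∈ Matrix.unitaryGroup (Fin d) ℂ,
      Measure.map (fun ψ => W *ᵥ ψ) μ = μ)
    {W : Matrix (Fin d) (Fin d) ℂ} (hW : W ∈ Matrix.unitaryGroup (Fin d) ℂ)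
    {f : (Fin d → ℂ) → ℂ} (hf : AEStronglyMeasurable f μ) :
    ∫ ψ, f (W *ᵥ ψ) ∂μ = ∫ ψ, f ψ ∂μ := by
  conv_rhs => rw [← hinvar W hW]
  rw [integral_map ((mulVec_continuous W).measurable.aemeasurable)]
  rw [hinvar W hW]; exact hf

variable (hinvar : ∀ W ∈ Matrix.unitaryGroup (Fin d) ℂ,
      Measure.map (fun ψ => W *ᵥ ψ) μ = μ)
  (hsph : ∀ᵐ ψ ∂μ, ∑ i, Complex.normSq (ψ i) = 1)

noncomputable def mval (i j k l : Fin d) : ℂ := ∫ ψ, mono i j k l ψ ∂μ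

omit [IsProbabilityMeasure μ] in
lemma mval_zero_of_scalar {i j k l : Fin d} {s : ℂ} (hs : s ≠ 1)
    (h : mval μ i j k l = s * mval μ i j k l) : mval μ i j k l = 0 := by
  have h2 : (1 - s) * mval μ i j k l = 0 := by linear_combination h
  rcases mul_eq_zero.mp h2 with h3 | h3
  · exact absurd (by linear_combination -h3) hs
  · exact h3

include hinvar

omit [IsProbabilityMeasure μ] in
lemma mval_phase (t i j k l : Fin d) :
    mval μ i j k l
      = ((if i = t then Complex.I else 1) * (starRingEnd ℂ) (if j = t then Complex.I else 1)
          * (starRingEnd ℂ) (if k = t then Complex.I else 1)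
          * (if l = t then Complex.I else 1)) * mval μ i j k l := by
  have h := integral_comp_unitary μ hinvar (phaseM_mem t)
    (f := mono i j k l) (mono_cont i j k l).aestronglyMeasurable
  unfold mval
  conv_lhs => rw [← h]
  have hpt : ∀ ψ, mono i j k l (phaseM t *ᵥ ψ)
      = ((if i = t then Complex.I else 1) * (starRingEnd ℂ) (if j = t then Complex.I else 1)
          * (starRingEnd ℂ) (if k = t then Complex.I else 1)
          * (if l = t then Complex.I else 1)) * mono i j k l ψ := by
    intro ψ
    unfold mono
    rw [phaseM_mulVec, phaseM_mulVec, phaseM_mulVec, phaseM_mulVec, _root_.map_mul, _root_.map_mul]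
    ring
  rw [integral_congr_ae (Filter.Eventually.of_forall hpt), integral_const_mul]

omit [IsProbabilityMeasure μ] in
lemma mval_vanish {i j k l : Fin d} (h : ¬((i = j ∧ k = l) ∨ (i = k ∧ j = l))) :
    mval μ i j k l = 0 := by
  push_neg at h
  obtain ⟨h1, h2⟩ := h
  by_cases hij : i = j
  · have hkl : k ≠ l := h1 hij
    have := mval_phase μ hinvar k i j k l
    apply mval_zero_of_scalar μ ?_ this
    rw [if_pos rfl, if_neg (fun hh : l = k => hkl hh.symm)]
    subst hij
    by_cases hik : i = k <;>
      simp [hik, Complex.ext_iff]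
  · by_cases hik : i = k
    · have hjl : j ≠ l := h2 hik
      have := mval_phase μ hinvar j i j k l
      apply mval_zero_of_scalar μ ?_ this
      rw [if_pos rfl, if_neg (fun hh : l = j => hjl hh.symm),
        if_neg (fun hh : i = j => hij hh), if_neg (fun hh : k = j => hij (hik.trans hh))]
      simp [Complex.ext_iff]
    · have := mval_phase μ hinvar i i j k l
      apply mval_zero_of_scalar μ ?_ this
      rw [if_pos rfl, if_neg (fun hh : j = i => hij hh.symm),
        if_neg (fun hh : k = i => hik hh.symm)]
      by_cases hli : l = i <;> simp [hli, Complex.ext_iff] <;> norm_num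

omit [IsProbabilityMeasure μ] in
lemma mval_perm (e : Equiv.Perm (Fin d)) (i j k l : Fin d) :
    mval μ i j k l = mval μ (e i) (e j) (e k) (e l) := by
  have h := integral_comp_unitary μ hinvar (permM_mem e)
    (f := mono (e i) (e j) (e k) (e l)) (mono_cont _ _ _ _).aestronglyMeasurable
  unfold mval
  rw [← h]
  apply integral_congr_ae
  apply Filter.Eventually.of_forall
  intro ψ
  simp [mono, permM_mulVec]

omit [IsProbabilityMeasure μ] hinvar in
lemma mval_symm (i j : Fin d) : mval μ i j i j = mval μ i i j j := by
  unfold mval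
  apply integral_congr_ae
  apply Filter.Eventually.of_forall
  intro ψ
  unfold mono
  ring

include hsph

omit hinvar in
lemma mval_norm : ∑ i, ∑ k, mval μ i i k k = 1 := by
  have h1 : ∀ i : Fin d, ∑ k, mval μ i i k k
      = ∫ ψ, ∑ k, mono i i k k ψ ∂μ :=
    fun i => (integral_finset_sum _ fun k _ => mono_integrable μ hsph i i k k).symm
  have h2 : ∑ i, ∑ k, mval μ i i k k = ∫ ψ, ∑ i, ∑ k, mono i i k k ψ ∂μ := by
    rw [Finset.sum_congr rfl fun i _ => h1 i]
    exact (integral_finset_sum _ fun i _ =>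
      integrable_finset_sum _ fun k _ => mono_integrable μ hsph i i k k).symm
  rw [h2]
  have h3 : ∀ᵐ ψ ∂μ, (∑ i, ∑ k, mono i i k k ψ) = (1 : ℂ) := by
    filter_upwards [hsph] with ψ hψ
    have hone : ∑ i, ψ i * (starRingEnd ℂ) (ψ i) = (1 : ℂ) := by
      have : ∀ i, ψ i * (starRingEnd ℂ) (ψ i) = ((Complex.normSq (ψ i) : ℝ) : ℂ) := by
        intro i; exact Complex.mul_conj (ψ i)
      rw [Finset.sum_congr rfl fun i _ => this i, ← Complex.ofReal_sum, hψ]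
      norm_num
    calc ∑ i, ∑ k, mono i i k k ψ
        = (∑ i, ψ i * (starRingEnd ℂ) (ψ i)) * (∑ k, ψ k * (starRingEnd ℂ) (ψ k)) := by
          rw [Finset.sum_mul_sum]
          apply Finset.sum_congr rfl
          intro i _
          apply Finset.sum_congr rfl
          intro k _
          unfold mono
          ring
      _ = 1 := by rw [hone, one_mul]
  rw [integral_congr_ae h3]
  simp

/-- index picker for the 16-term expansion -/
def pick (p q : Fin d) : Fin 2 → Fin d := ![p, q]

omit [IsProbabilityMeasure μ] hinvar hsph in
lemma mono_rot {p q : Fin d} (hpq : p ≠ q) (ψ : Fin d → ℂ) :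
    mono p p p p (rotM p q *ᵥ ψ)
      = (rc * rc * (rc * rc)) * ∑ v : Fin 2 × Fin 2 × Fin 2 × Fin 2,
          mono (pick p q v.1) (pick p q v.2.1) (pick p q v.2.2.1) (pick p q v.2.2.2) ψ := by
  unfold mono
  rw [rotM_mulVec_p hpq]
  simp only [Fintype.sum_prod_type, Fin.sum_univ_two, pick, Matrix.cons_val_zero,
    Matrix.cons_val_one, Matrix.head_cons, _root_.map_add, _root_.map_mul, rc_conj]
  ring

lemma mval_rot {p q : Fin d} (hpq : p ≠ q) :
    mval μ p p p p = (4 : ℂ)⁻¹ * ∑ v : Fin 2 × Fin 2 × Fin 2 × Fin 2,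
        mval μ (pick p q v.1) (pick p q v.2.1) (pick p q v.2.2.1) (pick p q v.2.2.2) := by
  have h := integral_comp_unitary μ hinvar (rotM_mem hpq)
    (f := mono p p p p) (mono_cont p p p p).aestronglyMeasurable
  unfold mval
  conv_lhs => rw [← h]
  rw [integral_congr_ae (Filter.Eventually.of_forall fun ψ => mono_rot hpq ψ),
    integral_const_mul,
    integral_finset_sum _ fun v _ => mono_integrable μ hsph _ _ _ _]
  have : rc * rc * (rc * rc) = (4:ℂ)⁻¹ := by
    rw [rc_sq]; norm_num
  rw [this]

lemma a_eq_2c {p q : Fin d} (hpq : p ≠ q) :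
    mval μ p p p p = 2 * mval μ p p q q := by
  have hqp : q ≠ p := Ne.symm hpq
  have hrot := mval_rot μ hinvar hsph hpq
  have hswap : mval μ q q q q = mval μ p p p p := by
    have := mval_perm μ hinvar (Equiv.swap p q) p p p p
    rw [Equiv.swap_apply_left] at this
    exact this.symm
  have hswap2 : mval μ q q p p = mval μ p p q q := by
    have := mval_perm μ hinvar (Equiv.swap p q) p p q q
    rw [Equiv.swap_apply_left, Equiv.swap_apply_right] at this
    exact this.symm
  have hsymm1 : mval μ p q p q = mval μ p p q q := mval_symm μ p q
  have hsymm2 : mval μ q p q p = mval μ p p q q := (mval_symm μ q p).trans hswap2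
  rw [Fintype.sum_prod_type] at hrot
  simp only [Fintype.sum_prod_type, Fin.sum_univ_two, pick, Matrix.cons_val_zero,
    Matrix.cons_val_one, Matrix.head_cons] at hrot
  rw [mval_vanish μ hinvar (i:=p) (j:=p) (k:=p) (l:=q) (by tauto),
    mval_vanish μ hinvar (i:=p) (j:=p) (k:=q) (l:=p) (by tauto),
    mval_vanish μ hinvar (i:=p) (j:=q) (k:=p) (l:=p) (by tauto),
    mval_vanish μ hinvar (i:=p) (j:=q) (k:=q) (l:=p) (by tauto),
    mval_vanish μ hinvar (i:=p) (j:=q) (k:=q) (l:=q) (by tauto),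
    mval_vanish μ hinvar (i:=q) (j:=p) (k:=p) (l:=p) (by tauto),
    mval_vanish μ hinvar (i:=q) (j:=p) (k:=p) (l:=q) (by tauto),
    mval_vanish μ hinvar (i:=q) (j:=p) (k:=q) (l:=q) (by tauto),
    mval_vanish μ hinvar (i:=q) (j:=q) (k:=p) (l:=q) (by tauto),
    mval_vanish μ hinvar (i:=q) (j:=q) (k:=q) (l:=p) (by tauto),
    hswap, hswap2, hsymm1, hsymm2] at hrot
  linear_combination 2 * hrot

lemma mval_eq (hd : 0 < d) (i j k l : Fin d) :
    mval μ i j k l = ((if i = j then (1:ℂ) else 0) * (if k = l then 1 else 0)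
      + (if i = k then 1 else 0) * (if j = l then 1 else 0)) / ((d : ℂ) * ((d : ℂ) + 1)) := by
  have hdne : (d : ℂ) ≠ 0 := Nat.cast_ne_zero.mpr hd.ne'
  have hdne1 : (d : ℂ) + 1 ≠ 0 := by
    have : ((d + 1 : ℕ) : ℂ) ≠ 0 := Nat.cast_ne_zero.mpr (by omega)
    push_cast at this
    exact this
  by_cases hd2 : 2 ≤ d
  · set p : Fin d := ⟨0, by omega⟩ with hp
    set q : Fin d := ⟨1, by omega⟩ with hq
    have hpq : p ≠ q := by simp [hp, hq, Fin.ext_iff]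
    have hdiag : ∀ r : Fin d, mval μ r r r r = mval μ p p p p := by
      intro r
      have := mval_perm μ hinvar (Equiv.swap p r) p p p p
      rw [Equiv.swap_apply_left] at this
      exact this.symm
    have hoff : ∀ r s : Fin d, r ≠ s → mval μ r r s s = mval μ p p q q := by
      intro r s hrs
      have htne : (Equiv.swap p r) q ≠ r := by
        intro h
        exact (Ne.symm hpq) (Equiv.injective (Equiv.swap p r)
          (h.trans (Equiv.swap_apply_left p r).symm))
      set e := (Equiv.swap p r).trans (Equiv.swap ((Equiv.swap p r) q) s) with he
      have hep : e p = r := by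
        rw [he]
        simp only [Equiv.trans_apply, Equiv.swap_apply_left]
        exact Equiv.swap_apply_of_ne_of_ne (Ne.symm htne) hrs
      have heq : e q = s := by
        rw [he]
        simp only [Equiv.trans_apply]
        exact Equiv.swap_apply_left _ _
      have := mval_perm μ hinvar e p p q q
      rw [hep, heq] at this
      exact this.symm
    have ha2c := a_eq_2c μ hinvar hsph hpq
    have hnorm := mval_norm μ hsph
    have hsum2 : ∑ r : Fin d, ∑ s : Fin d, mval μ r r s s
        = (d : ℂ) * mval μ p p p p + ((d:ℂ) * (d:ℂ) - (d:ℂ)) * mval μ p p q q := by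
      have hterm : ∀ r s : Fin d, mval μ r r s s
          = mval μ p p q q + (if r = s then mval μ p p p p - mval μ p p q q else 0) := by
        intro r s
        by_cases hrs : r = s
        · rw [if_pos hrs, hrs, hdiag s]
          ring
        · rw [if_neg hrs, hoff r s hrs]
          ring
      rw [Finset.sum_congr rfl fun r _ => Finset.sum_congr rfl fun s _ => hterm r s]
      simp only [Finset.sum_add_distrib, Finset.sum_const, Finset.card_univ,
        Fintype.card_fin, Finset.sum_ite_eq, Finset.mem_univ, if_pos]
      ring
    rw [hsum2] at hnorm
    have hc : mval μ p p q q = ((d:ℂ) * ((d:ℂ) + 1))⁻¹ :=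
      eq_inv_of_mul_eq_one_left (by linear_combination hnorm - (d:ℂ) * ha2c)
    by_cases hA : i = j ∧ k = l
    · obtain ⟨hij, hkl⟩ := hA
      subst hij; subst hkl
      by_cases hik : i = k
      · subst hik
        rw [hdiag i, ha2c, hc]
        simp only [if_pos rfl, eq_self_iff_true, if_true]
        rw [eq_div_iff (mul_ne_zero hdne hdne1)]
        field_simp
        try norm_num
      · rw [hoff i k hik, hc]
        simp only [if_pos rfl, if_neg hik, eq_self_iff_true, if_true]
        rw [eq_div_iff (mul_ne_zero hdne hdne1)]
        field_simp
        try norm_num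
    · by_cases hB : i = k ∧ j = l
      · obtain ⟨hik, hjl⟩ := hB
        subst hik; subst hjl
        have hij : i ≠ j := fun h => hA ⟨h, h.symm ▸ rfl⟩
        rw [mval_symm μ i j, hoff i j hij, hc]
        simp only [if_pos rfl, if_neg hij, eq_self_iff_true, if_true]
        rw [eq_div_iff (mul_ne_zero hdne hdne1)]
        field_simp
        try norm_num
      · rw [mval_vanish μ hinvar (by tauto)]
        have e1 : (if i = j then (1:ℂ) else 0) * (if k = l then 1 else 0) = 0 := by
          by_cases h1 : i = j <;> by_cases h2 : k = l <;> simp_all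
        have e2 : (if i = k then (1:ℂ) else 0) * (if j = l then 1 else 0) = 0 := by
          by_cases h1 : i = k <;> by_cases h2 : j = l <;> simp_all
        rw [e1, e2]
        simp
  · have hd1 : d = 1 := by omega
    have hall : ∀ x y : Fin d, x = y := by
      intro x y
      have hx := x.isLt
      have hy := y.isLt
      exact Fin.ext (by omega)
    have hnorm := mval_norm μ hsph
    have hone : mval μ i j k l = 1 := by
      have : ∀ r s : Fin d, mval μ r r s s = mval μ i j k l := by
        intro r s
        rw [hall r i, hall s k, hall j i, hall l k]
      rw [Finset.sum_congr rfl fun r _ => Finset.sum_congr rfl fun s _ => this r s] at hnorm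
      simp only [Finset.sum_const, Finset.card_univ, Fintype.card_fin, nsmul_eq_mul] at hnorm
      have hdc : (d : ℂ) = 1 := by rw [hd1]; norm_num
      rw [hdc] at hnorm
      linear_combination hnorm
    have hdc : (d : ℂ) = 1 := by rw [hd1]; norm_num
    rw [hone, if_pos (hall i j), if_pos (hall k l), if_pos (hall i k), if_pos (hall j l), hdc]
    norm_num

end S16

open S16 in
private theorem stmt16'
 (d : ℕ) (hd : 0 < d)
    (Λ : Matrix (Fin d) (Fin d) ℂ →ₗ[ℂ] Matrix (Fin d) (Fin d) ℂ)
    (htp : ∀ X, (Λ X).trace = X.trace)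
    (μ : Measure (Fin d → ℂ)) [IsProbabilityMeasure μ]
    (hsph : ∀ᵐ ψ ∂μ, ∑ i, Complex.normSq (ψ i) = 1)
    (hinvar : ∀ W ∈ Matrix.unitaryGroup (Fin d) ℂ,
      Measure.map (fun ψ => W *ᵥ ψ) μ = μ) :
    (∫ ψ, (star ψ ⬝ᵥ (Λ (vecMulVec ψ (star ψ)) *ᵥ ψ)).re ∂μ)
      = (d * (star (mesVec d) ⬝ᵥ (lTen (fun X => Λ X) (mes d) *ᵥ mesVec d)).re + 1) /
        (d + 1) := by
  classical
  have hdneR : (d : ℝ) ≠ 0 := Nat.cast_ne_zero.mpr hd.ne'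
  have hdne : (d : ℂ) ≠ 0 := Nat.cast_ne_zero.mpr hd.ne'
  have hdne1 : (d : ℂ) + 1 ≠ 0 := by
    have : ((d + 1 : ℕ) : ℂ) ≠ 0 := Nat.cast_ne_zero.mpr (by omega)
    push_cast at this; exact this
  set S : ℂ := ∑ i : Fin d, ∑ j : Fin d, Λ (Matrix.single i j (1:ℂ)) i j with hSdef
  -- pointwise expansion of the fidelity integrand
  have hM : ∀ ψ : Fin d → ℂ, vecMulVec ψ (star ψ)
      = ∑ p : Fin d × Fin d,
          (ψ p.1 * (starRingEnd ℂ) (ψ p.2)) • Matrix.single p.1 p.2 (1:ℂ) := by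
    intro ψ
    ext a b
    simp [vecMulVec_apply, Matrix.sum_apply, Matrix.single, Fintype.sum_prod_type,
      ite_and, mul_ite, mul_one, mul_zero, RCLike.star_def]
  have hF : ∀ ψ : Fin d → ℂ, star ψ ⬝ᵥ (Λ (vecMulVec ψ (star ψ)) *ᵥ ψ)
      = ∑ t : (Fin d × Fin d) × Fin d × Fin d,
          Λ (Matrix.single t.2.1 t.2.2 (1:ℂ)) t.1.1 t.1.2
            * mono t.2.1 t.2.2 t.1.1 t.1.2 ψ := by
    intro ψ
    rw [hM ψ, map_sum]
    simp only [dotProduct, mulVec, LinearMap.map_smul, Matrix.sum_apply, Matrix.smul_apply,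
      smul_eq_mul, Finset.sum_mul, Finset.mul_sum, Fintype.sum_prod_type, mono,
      Pi.star_apply, RCLike.star_def]
    apply Finset.sum_congr rfl; intro k _
    apply Finset.sum_congr rfl; intro l _
    apply Finset.sum_congr rfl; intro i _
    apply Finset.sum_congr rfl; intro j _
    ring
  -- trace preservation
  have htr : ∀ i : Fin d, ∑ k, Λ (Matrix.single i i (1:ℂ)) k k = 1 := by
    intro i
    have h1 : (Λ (Matrix.single i i (1:ℂ))).trace = (Matrix.single i i (1:ℂ)).trace := htp _
    have h2 : (Matrix.single i i (1:ℂ)).trace = 1 := by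
      simp [Matrix.trace, Matrix.diag, Matrix.single]
    have h3 : (Λ (Matrix.single i i (1:ℂ))).trace
        = ∑ k, Λ (Matrix.single i i (1:ℂ)) k k := by
      simp [Matrix.trace, Matrix.diag]
    rw [← h3, h1, h2]
  -- the two collapsed sums
  have hX : ∑ k : Fin d, ∑ l : Fin d, ∑ i : Fin d, ∑ j : Fin d,
      Λ (Matrix.single i j (1:ℂ)) k l
        * ((if i = j then (1:ℂ) else 0) * (if k = l then 1 else 0)) = (d : ℂ) := by
    have step1 : ∀ k l i : Fin d, ∑ j, Λ (Matrix.single i j (1:ℂ)) k l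
        * ((if i = j then (1:ℂ) else 0) * (if k = l then 1 else 0))
        = if k = l then Λ (Matrix.single i i (1:ℂ)) k l else 0 := by
      intro k l i
      rw [Finset.sum_eq_single i]
      · by_cases h : k = l <;> simp [h]
      · intro j _ hj
        rw [if_neg (fun h : i = j => hj h.symm)]
        ring
      · simp
    have step2 : ∀ k l : Fin d, ∑ i, (if k = l then Λ (Matrix.single i i (1:ℂ)) k l else 0)
        = if k = l then ∑ i, Λ (Matrix.single i i (1:ℂ)) k l else 0 := by
      intro k l
      by_cases h : k = l <;> simp [h]
    have step3 : ∀ k : Fin d, ∑ l, (if k = l then ∑ i, Λ (Matrix.single i i (1:ℂ)) k l else 0)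
        = ∑ i, Λ (Matrix.single i i (1:ℂ)) k k := by
      intro k
      rw [Finset.sum_ite_eq Finset.univ k fun l => ∑ i, Λ (Matrix.single i i (1:ℂ)) k l]
      simp
    rw [Finset.sum_congr rfl fun k _ => Finset.sum_congr rfl fun l _ =>
      (Finset.sum_congr rfl fun i _ => step1 k l i).trans (step2 k l)]
    rw [Finset.sum_congr rfl fun k _ => step3 k, Finset.sum_comm]
    rw [Finset.sum_congr rfl fun i _ => htr i]
    simp
  have hY : ∑ k : Fin d, ∑ l : Fin d, ∑ i : Fin d, ∑ j : Fin d,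
      Λ (Matrix.single i j (1:ℂ)) k l
        * ((if i = k then (1:ℂ) else 0) * (if j = l then 1 else 0)) = S := by
    have step1 : ∀ k l i : Fin d, ∑ j, Λ (Matrix.single i j (1:ℂ)) k l
        * ((if i = k then (1:ℂ) else 0) * (if j = l then 1 else 0))
        = if i = k then Λ (Matrix.single i l (1:ℂ)) k l else 0 := by
      intro k l i
      rw [Finset.sum_eq_single l]
      · by_cases h : i = k <;> simp [h]
      · intro j _ hj
        rw [if_neg hj]
        ring
      · simp
    have step2 : ∀ k l : Fin d, ∑ i, (if i = k then Λ (Matrix.single i l (1:ℂ)) k l else 0)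
        = Λ (Matrix.single k l (1:ℂ)) k l := by
      intro k l
      rw [Finset.sum_ite_eq' Finset.univ k fun i => Λ (Matrix.single i l (1:ℂ)) k l]
      simp
    rw [Finset.sum_congr rfl fun k _ => Finset.sum_congr rfl fun l _ =>
      (Finset.sum_congr rfl fun i _ => step1 k l i).trans (step2 k l)]
  -- the integral of the fidelity integrand
  have hIntF : Integrable (fun ψ => star ψ ⬝ᵥ (Λ (vecMulVec ψ (star ψ)) *ᵥ ψ)) μ := by
    have : Integrable (fun ψ => ∑ t : (Fin d × Fin d) × Fin d × Fin d,
        Λ (Matrix.single t.2.1 t.2.2 (1:ℂ)) t.1.1 t.1.2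
          * mono t.2.1 t.2.2 t.1.1 t.1.2 ψ) μ :=
      integrable_finset_sum _ fun t _ => (mono_integrable μ hsph _ _ _ _).const_mul _
    exact this.congr (Filter.Eventually.of_forall fun ψ => (hF ψ).symm)
  have hInt : ∫ ψ, (star ψ ⬝ᵥ (Λ (vecMulVec ψ (star ψ)) *ᵥ ψ)) ∂μ
      = ((d : ℂ) + S) / ((d : ℂ) * ((d : ℂ) + 1)) := by
    rw [integral_congr_ae (Filter.Eventually.of_forall hF),
      integral_finset_sum _ (fun t _ => (mono_integrable μ hsph _ _ _ _).const_mul _)]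
    have hterm : ∀ t : (Fin d × Fin d) × Fin d × Fin d,
        ∫ ψ, Λ (Matrix.single t.2.1 t.2.2 (1:ℂ)) t.1.1 t.1.2
            * mono t.2.1 t.2.2 t.1.1 t.1.2 ψ ∂μ
        = Λ (Matrix.single t.2.1 t.2.2 (1:ℂ)) t.1.1 t.1.2
            * (((if t.2.1 = t.2.2 then (1:ℂ) else 0) * (if t.1.1 = t.1.2 then 1 else 0)
              + (if t.2.1 = t.1.1 then 1 else 0) * (if t.2.2 = t.1.2 then 1 else 0))
              / ((d : ℂ) * ((d : ℂ) + 1))) := by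
      intro t
      rw [MeasureTheory.integral_const_mul]
      rw [show ∫ ψ, mono t.2.1 t.2.2 t.1.1 t.1.2 ψ ∂μ = mval μ t.2.1 t.2.2 t.1.1 t.1.2 from rfl]
      rw [mval_eq μ hinvar hsph hd]
    rw [Finset.sum_congr rfl fun t _ => hterm t]
    rw [eq_div_iff (mul_ne_zero hdne hdne1), Finset.sum_mul]
    have hterm2 : ∀ t : (Fin d × Fin d) × Fin d × Fin d,
        (Λ (Matrix.single t.2.1 t.2.2 (1:ℂ)) t.1.1 t.1.2
            * (((if t.2.1 = t.2.2 then (1:ℂ) else 0) * (if t.1.1 = t.1.2 then 1 else 0)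
              + (if t.2.1 = t.1.1 then 1 else 0) * (if t.2.2 = t.1.2 then 1 else 0))
              / ((d : ℂ) * ((d : ℂ) + 1)))) * ((d : ℂ) * ((d : ℂ) + 1))
        = Λ (Matrix.single t.2.1 t.2.2 (1:ℂ)) t.1.1 t.1.2
            * ((if t.2.1 = t.2.2 then (1:ℂ) else 0) * (if t.1.1 = t.1.2 then 1 else 0))
          + Λ (Matrix.single t.2.1 t.2.2 (1:ℂ)) t.1.1 t.1.2
            * ((if t.2.1 = t.1.1 then 1 else 0) * (if t.2.2 = t.1.2 then 1 else 0)) := by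
      intro t
      rw [mul_assoc, div_mul_cancel₀ _ (mul_ne_zero hdne hdne1), mul_add]
    rw [Finset.sum_congr rfl fun t _ => hterm2 t, Finset.sum_add_distrib]
    simp only [Fintype.sum_prod_type]
    rw [show (∑ k : Fin d, ∑ l : Fin d, ∑ i : Fin d, ∑ j : Fin d,
      Λ (Matrix.single i j (1:ℂ)) k l
        * ((if i = j then (1:ℂ) else 0) * (if k = l then 1 else 0))) = (d:ℂ) from hX,
      show (∑ k : Fin d, ∑ l : Fin d, ∑ i : Fin d, ∑ j : Fin d,
      Λ (Matrix.single i j (1:ℂ)) k l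
        * ((if i = k then (1:ℂ) else 0) * (if j = l then 1 else 0))) = S from hY]
  -- the entanglement fidelity side
  have hlTen : ∀ p q : Fin d × Fin d, lTen (fun X => Λ X) (mes d) p q
      = (d : ℂ)⁻¹ * Λ (Matrix.single p.1 q.1 (1:ℂ)) p.2 q.2 := by
    intro p q
    have hmat : (fun x y => mes d (p.1, x) (q.1, y))
        = ((d : ℂ)⁻¹ • Matrix.single p.1 q.1 (1:ℂ) : Matrix (Fin d) (Fin d) ℂ) := by
      ext x y
      by_cases h : p.1 = x ∧ q.1 = y <;> simp [mes, Matrix.single, h]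
    show Λ (fun x y => mes d (p.1, x) (q.1, y)) p.2 q.2 = _
    rw [hmat, LinearMap.map_smul]
    simp
  have hsqd : (((Real.sqrt d : ℝ) : ℂ))⁻¹ * (((Real.sqrt d : ℝ) : ℂ))⁻¹ = (d : ℂ)⁻¹ := by
    rw [← mul_inv, ← Complex.ofReal_mul, Real.mul_self_sqrt (by positivity)]
    norm_num
  have hsqd' : ((((Real.sqrt d)⁻¹ : ℝ)) : ℂ) * ((((Real.sqrt d)⁻¹ : ℝ)) : ℂ) = (d:ℂ)⁻¹ := by
    have h0 : ((Real.sqrt d)⁻¹ * (Real.sqrt d)⁻¹ : ℝ) = (d:ℝ)⁻¹ := by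
      rw [← mul_inv, Real.mul_self_sqrt (by positivity)]
    rw [← Complex.ofReal_mul, h0, Complex.ofReal_inv, Complex.ofReal_natCast]
  have hR : star (mesVec d) ⬝ᵥ (lTen (fun X => Λ X) (mes d) *ᵥ mesVec d)
      = S / ((d : ℂ) * (d : ℂ)) := by
    have hinner : ∀ p : Fin d × Fin d,
        (lTen (fun X => Λ X) (mes d) *ᵥ mesVec d) p
          = ∑ s : Fin d, (d:ℂ)⁻¹ * Λ (Matrix.single p.1 s 1) p.2 s
              * ((((Real.sqrt d)⁻¹ : ℝ)) : ℂ) := by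
      intro p
      simp only [mulVec, dotProduct, Fintype.sum_prod_type]
      apply Finset.sum_congr rfl; intro s _
      rw [Finset.sum_eq_single s]
      · rw [hlTen p (s, s)]
        simp [mesVec]
      · intro y _ hy
        have h0 : mesVec d (s, y) = 0 := by simp [mesVec, Ne.symm hy]
        rw [h0, mul_zero]
      · simp
    calc star (mesVec d) ⬝ᵥ (lTen (fun X => Λ X) (mes d) *ᵥ mesVec d)
        = ∑ p : Fin d × Fin d, (starRingEnd ℂ) (mesVec d p)
            * (lTen (fun X => Λ X) (mes d) *ᵥ mesVec d) p := by
          simp [dotProduct, Pi.star_apply, RCLike.star_def]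
      _ = ∑ r : Fin d, ((((Real.sqrt d)⁻¹ : ℝ)) : ℂ)
            * ∑ s : Fin d, (d:ℂ)⁻¹ * Λ (Matrix.single r s 1) r s
                * ((((Real.sqrt d)⁻¹ : ℝ)) : ℂ) := by
          rw [Fintype.sum_prod_type]
          apply Finset.sum_congr rfl; intro r _
          rw [Finset.sum_eq_single r]
          · rw [hinner (r, r)]
            simp [mesVec, Complex.conj_ofReal]
          · intro y _ hy
            have h0 : mesVec d (r, y) = 0 := by simp [mesVec, Ne.symm hy]
            rw [h0, map_zero, zero_mul]
          · simp
      _ = ∑ r : Fin d, ∑ s : Fin d, Λ (Matrix.single r s 1) r s / ((d:ℂ) * (d:ℂ)) := by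
          apply Finset.sum_congr rfl; intro r _
          rw [Finset.mul_sum]
          apply Finset.sum_congr rfl; intro s _
          rw [div_eq_mul_inv, mul_inv]
          linear_combination (Λ (Matrix.single r s 1) r s * (d:ℂ)⁻¹) * hsqd'
      _ = S / ((d : ℂ) * (d : ℂ)) := by
          rw [hSdef]
          simp only [← Finset.sum_div]
  rw [hR]
  have hL := _root_.integral_re hIntF
  simp only [RCLike.re_to_complex] at hL
  rw [hL, hInt]
  have hDc : (d : ℂ) * ((d : ℂ) + 1) = (((d * (d+1) : ℝ)) : ℂ) := by push_cast; ring
  have hDc2 : (d : ℂ) * (d : ℂ) = (((d * d : ℝ)) : ℂ) := by push_cast; ring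
  rw [hDc, hDc2, Complex.div_ofReal_re, Complex.div_ofReal_re]
  simp only [Complex.add_re, Complex.natCast_re]
  have h1R : (d : ℝ) + 1 ≠ 0 := by positivity
  field_simp
  ring

/-- Average vs. entanglement fidelity: for a CPTP map `Λ` on a `d`-dimensional system,
`F_avg(Λ) = (d F_ent(Λ) + 1)/(d + 1)`, where `F_avg` is the Haar average of
`⟨φ|Λ(φ)|φ⟩` over pure states and `F_ent = ⟨Φ|(id ⊗ Λ)(Φ)|Φ⟩`. -/
theorem stmt16 (d : ℕ) (hd : 0 < d)
    (Λ : Matrix (Fin d) (Fin d) ℂ →ₗ[ℂ] Matrix (Fin d) (Fin d) ℂ)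
    (hcp : IsCP (fun X => Λ X)) (htp : ∀ X, (Λ X).trace = X.trace)
    (μ : Measure (Fin d → ℂ)) [IsProbabilityMeasure μ]
    (hsph : ∀ᵐ ψ ∂μ, ∑ i, Complex.normSq (ψ i) = 1)
    (hinvar : ∀ W ∈ Matrix.unitaryGroup (Fin d) ℂ,
      Measure.map (fun ψ => W *ᵥ ψ) μ = μ) :
    (∫ ψ, (star ψ ⬝ᵥ (Λ (vecMulVec ψ (star ψ)) *ᵥ ψ)).re ∂μ)
      = (d * (star (mesVec d) ⬝ᵥ (lTen (fun X => Λ X) (mes d) *ᵥ mesVec d)).re + 1) /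
        (d + 1) := by
  exact stmt16' d hd Λ htp μ hsph hinvar
end
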